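/- arXiv:2407.06528 — 4 statements merged into one kernel-verified Lean document; each statement's English description precedes it below -/
import Mathlib

section
/- Let T ≥ 1 be an integer, λ > 0 and α > 0 with 2αλT < 1. Then the mean-field operator 𝒯 satisfies ‖𝒯g¹ − 𝒯g²‖_∞ ≤ 2αλT · ‖g¹ − g²‖_∞ for all g¹, g² ∈ ℝ^T (sup norm on ℝ^T), i.e. 𝒯 is a contraction, and consequently there exists a unique g* ∈ [0,1]^T with 𝒯(g*) = g*. -/
open MeasureTheory Matrix

/-- State–action value functions of the mean-field sensing problem, indexed by
time-to-go: `Qrev T lam A Γ μ g m e a = Q^g_{T-1-m}(e, a)`, defined by the backward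
recursion `Q^g_k(e,a) = λ g_k a + ∫ [ e'ᵀ Γ_{k+1} e' + min_a' Q^g_{k+1}(e', a') ] dμ(w)`
where `e' = (1-a) A e + w` and the terminal value `V^g_T ≡ 0`. -/
noncomputable def Qrev {n : ℕ} (T : ℕ) (lam : ℝ) (A : Matrix (Fin n) (Fin n) ℝ)
    (Γ : ℕ → Matrix (Fin n) (Fin n) ℝ) (μ : Measure (Fin n → ℝ)) (g : ℕ → ℝ) :
    ℕ → (Fin n → ℝ) → ℝ → ℝ
  | 0, e, a =>
      lam * g (T - 1) * a +
        ∫ w, ((1 - a) • (A *ᵥ e) + w) ⬝ᵥ ((Γ T) *ᵥ ((1 - a) • (A *ᵥ e) + w)) ∂μ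
  | m + 1, e, a =>
      lam * g (T - 1 - (m + 1)) * a +
        ∫ w,
          (((1 - a) • (A *ᵥ e) + w) ⬝ᵥ ((Γ (T - (m + 1))) *ᵥ ((1 - a) • (A *ᵥ e) + w)) +
            min (Qrev T lam A Γ μ g m ((1 - a) • (A *ᵥ e) + w) 0)
              (Qrev T lam A Γ μ g m ((1 - a) • (A *ᵥ e) + w) 1)) ∂μ

/-- `Qval T lam A Γ μ g k e a = Q^g_k(e,a)` for `0 ≤ k ≤ T-1`. -/
noncomputable def Qval {n : ℕ} (T : ℕ) (lam : ℝ) (A : Matrix (Fin n) (Fin n) ℝ)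
    (Γ : ℕ → Matrix (Fin n) (Fin n) ℝ) (μ : Measure (Fin n → ℝ)) (g : ℕ → ℝ)
    (k : ℕ) (e : Fin n → ℝ) (a : ℝ) : ℝ :=
  Qrev T lam A Γ μ g (T - 1 - k) e a

/-- Value of information `VoI^g_k(e) = Q^g_k(e,0) - Q^g_k(e,1)`. -/
noncomputable def VoI {n : ℕ} (T : ℕ) (lam : ℝ) (A : Matrix (Fin n) (Fin n) ℝ)
    (Γ : ℕ → Matrix (Fin n) (Fin n) ℝ) (μ : Measure (Fin n → ℝ)) (g : ℕ → ℝ)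
    (k : ℕ) (e : Fin n → ℝ) : ℝ :=
  Qval T lam A Γ μ g k e 0 - Qval T lam A Γ μ g k e 1

/-- Extension of a finite sequence `g ∈ ℝ^T` to `ℕ → ℝ` (by zero). -/
def extendSeq (T : ℕ) (g : Fin T → ℝ) : ℕ → ℝ :=
  fun j => if h : j < T then g ⟨j, h⟩ else 0

/-- The Boltzmann (logistic) function `σ_α(x) = 1/(1 + exp(-α x))`. -/
noncomputable def boltz (α x : ℝ) : ℝ := (1 + Real.exp (-α * x))⁻¹

/-- The mean-field operator `(𝒯 g)_k = ∫ σ_α(VoI^g_k(e)) dν_k(e)`. -/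
noncomputable def Tmf {n : ℕ} (T : ℕ) (lam α : ℝ) (A : Matrix (Fin n) (Fin n) ℝ)
    (Γ : ℕ → Matrix (Fin n) (Fin n) ℝ) (μ : Measure (Fin n → ℝ))
    (ν : Fin T → Measure (Fin n → ℝ)) (g : Fin T → ℝ) : Fin T → ℝ :=
  fun k => ∫ e, boltz α (VoI T lam A Γ μ (extendSeq T g) (k : ℕ) e) ∂(ν k)

section Aux
variable {n : ℕ}
variable {n : ℕ}

def matC (M : Matrix (Fin n) (Fin n) ℝ) : ℝ := ∑ i, ∑ j, |M i j|

lemma matC_nonneg (M : Matrix (Fin n) (Fin n) ℝ) : 0 ≤ matC M := by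
  unfold matC; positivity

lemma dot_bound (M : Matrix (Fin n) (Fin n) ℝ) (v : Fin n → ℝ) :
    |v ⬝ᵥ (M *ᵥ v)| ≤ matC M * (‖v‖ * ‖v‖) := by
  have hv : ∀ i, |v i| ≤ ‖v‖ := fun i => by
    simpa [Real.norm_eq_abs] using norm_le_pi_norm v i
  have h0 : (0:ℝ) ≤ ‖v‖ := norm_nonneg v
  calc |v ⬝ᵥ (M *ᵥ v)| = |∑ i, v i * ∑ j, M i j * v j| := by
        simp [dotProduct, Matrix.mulVec, dotProduct]
    _ ≤ ∑ i, |v i * ∑ j, M i j * v j| := Finset.abs_sum_le_sum_abs _ _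
    _ ≤ ∑ i, ∑ j, |M i j| * (‖v‖ * ‖v‖) := by
        refine Finset.sum_le_sum fun i _ => ?_
        rw [abs_mul]
        calc |v i| * |∑ j, M i j * v j| ≤ ‖v‖ * ∑ j, |M i j * v j| := by
              refine mul_le_mul (hv i) (Finset.abs_sum_le_sum_abs _ _) (abs_nonneg _) h0
          _ ≤ ‖v‖ * ∑ j, |M i j| * ‖v‖ := by
              refine mul_le_mul_of_nonneg_left (Finset.sum_le_sum fun j _ => ?_) h0
              rw [abs_mul]
              exact mul_le_mul_of_nonneg_left (hv j) (abs_nonneg _)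
          _ = ∑ j, |M i j| * (‖v‖ * ‖v‖) := by rw [Finset.mul_sum]; exact Finset.sum_congr rfl fun j _ => by ring
    _ = matC M * (‖v‖ * ‖v‖) := by rw [matC, Finset.sum_mul]; congr 1; ext i; rw [Finset.sum_mul]

lemma mulVec_bound (M : Matrix (Fin n) (Fin n) ℝ) (v : Fin n → ℝ) :
    ‖M *ᵥ v‖ ≤ matC M * ‖v‖ := by
  have h0 : (0:ℝ) ≤ ‖v‖ := norm_nonneg v
  rw [pi_norm_le_iff_of_nonneg (mul_nonneg (matC_nonneg M) h0)]
  intro i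
  have hv : ∀ j, |v j| ≤ ‖v‖ := fun j => by
    simpa [Real.norm_eq_abs] using norm_le_pi_norm v j
  calc ‖(M *ᵥ v) i‖ = |∑ j, M i j * v j| := by simp [Matrix.mulVec, dotProduct, Real.norm_eq_abs]
    _ ≤ ∑ j, |M i j| * ‖v‖ := by
        refine le_trans (Finset.abs_sum_le_sum_abs _ _) (Finset.sum_le_sum fun j _ => ?_)
        rw [abs_mul]; exact mul_le_mul_of_nonneg_left (hv j) (abs_nonneg _)
    _ = (∑ j, |M i j|) * ‖v‖ := by rw [Finset.sum_mul]
    _ ≤ matC M * ‖v‖ := by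
        refine mul_le_mul_of_nonneg_right ?_ h0
        exact Finset.single_le_sum (f := fun i => ∑ j, |M i j|) (fun i _ => by positivity) (Finset.mem_univ i)

lemma cont_quad (M : Matrix (Fin n) (Fin n) ℝ) : Continuous fun v : Fin n → ℝ => v ⬝ᵥ (M *ᵥ v) := by
  simp only [dotProduct, Matrix.mulVec]
  exact continuous_finset_sum _ fun i _ => ((continuous_apply i).mul
    (continuous_finset_sum _ fun j _ => (continuous_const.mul (continuous_apply j))))

lemma cont_mulVec (M : Matrix (Fin n) (Fin n) ℝ) : Continuous fun v : Fin n → ℝ => M *ᵥ v := by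
  refine continuous_pi fun i => ?_
  simp only [Matrix.mulVec, dotProduct]
  exact continuous_finset_sum _ fun j _ => (continuous_const.mul (continuous_apply j))

lemma norm_integrable {μ : Measure (Fin n → ℝ)} [IsProbabilityMeasure μ]
    (hmom : Integrable (fun w : Fin n → ℝ => ‖w‖ ^ 2) μ) :
    Integrable (fun w : Fin n → ℝ => ‖w‖) μ := by
  refine ((integrable_const (1:ℝ)).add hmom).mono' continuous_norm.aestronglyMeasurable ?_
  refine Filter.Eventually.of_forall fun w => ?_
  have h := norm_nonneg w
  simp only [norm_norm, Pi.add_apply]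
  nlinarith [sq_nonneg (‖w‖ - 1)]

lemma int_pow {μ : Measure (Fin n → ℝ)} [IsProbabilityMeasure μ]
    (hmom : Integrable (fun w : Fin n → ℝ => ‖w‖ ^ 2) μ) (d : ℝ) :
    Integrable (fun w : Fin n → ℝ => (d + ‖w‖) ^ 2) μ := by
  have : (fun w : Fin n → ℝ => (d + ‖w‖) ^ 2)
      = fun w => d ^ 2 + (2 * d) * ‖w‖ + ‖w‖ ^ 2 := by funext w; ring
  rw [this]
  exact (((integrable_const _).add ((norm_integrable hmom).const_mul _)).add hmom)

lemma helper (A M : Matrix (Fin n) (Fin n) ℝ) (μ : Measure (Fin n → ℝ))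
    [IsProbabilityMeasure μ] (hmom : Integrable (fun w => ‖w‖ ^ 2) μ)
    (b : ℝ) (hb : |b| ≤ 1) (φ : (Fin n → ℝ) → ℝ) (hφc : Continuous φ)
    (C : ℝ) (hC : 0 ≤ C) (hφb : ∀ x, |φ x| ≤ C * (1 + ‖x‖)^2) :
    (∀ e, Integrable (fun w => (b • (A *ᵥ e) + w) ⬝ᵥ (M *ᵥ (b • (A *ᵥ e) + w)) + φ (b • (A *ᵥ e) + w)) μ) ∧
    Continuous (fun e => ∫ w, ((b • (A *ᵥ e) + w) ⬝ᵥ (M *ᵥ (b • (A *ᵥ e) + w)) + φ (b • (A *ᵥ e) + w)) ∂μ) ∧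
    (∀ e, |∫ w, ((b • (A *ᵥ e) + w) ⬝ᵥ (M *ᵥ (b • (A *ᵥ e) + w)) + φ (b • (A *ᵥ e) + w)) ∂μ|
       ≤ (matC M + C) * (2 + 2 * ∫ w, ‖w‖^2 ∂μ) * (1 + matC A)^2 * (1 + ‖e‖)^2) := by
  set cA := matC A with hcA
  have hcA0 : 0 ≤ cA := matC_nonneg A
  have hcM0 : 0 ≤ matC M := matC_nonneg M
  set F : (Fin n → ℝ) → (Fin n → ℝ) → ℝ :=
    fun e w => (b • (A *ᵥ e) + w) ⬝ᵥ (M *ᵥ (b • (A *ᵥ e) + w)) + φ (b • (A *ᵥ e) + w) with hF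
  -- pointwise bound
  have hψ : ∀ e w : Fin n → ℝ, ‖b • (A *ᵥ e) + w‖ ≤ cA * ‖e‖ + ‖w‖ := by
    intro e w
    calc ‖b • (A *ᵥ e) + w‖ ≤ ‖b • (A *ᵥ e)‖ + ‖w‖ := norm_add_le _ _
      _ = |b| * ‖A *ᵥ e‖ + ‖w‖ := by rw [norm_smul, Real.norm_eq_abs]
      _ ≤ 1 * (cA * ‖e‖) + ‖w‖ := by
          have h := mul_le_mul hb (mulVec_bound A e) (norm_nonneg _) zero_le_one
          rw [← hcA] at h
          linarith
      _ = cA * ‖e‖ + ‖w‖ := by ring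
  have hptw : ∀ e w, |F e w| ≤ (matC M + C) * ((1 + cA * ‖e‖) + ‖w‖) ^ 2 := by
    intro e w
    set v := b • (A *ᵥ e) + w with hv
    have h1 : ‖v‖ ≤ cA * ‖e‖ + ‖w‖ := hψ e w
    have h2 : |v ⬝ᵥ (M *ᵥ v)| ≤ matC M * (‖v‖ * ‖v‖) := dot_bound M v
    have h3 : |φ v| ≤ C * (1 + ‖v‖) ^ 2 := hφb v
    have hv0 : (0:ℝ) ≤ ‖v‖ := norm_nonneg v
    have he0 : (0:ℝ) ≤ ‖e‖ := norm_nonneg e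
    have hw0 : (0:ℝ) ≤ ‖w‖ := norm_nonneg w
    calc |F e w| ≤ |v ⬝ᵥ (M *ᵥ v)| + |φ v| := abs_add_le _ _
      _ ≤ matC M * (‖v‖ * ‖v‖) + C * (1 + ‖v‖) ^ 2 := add_le_add h2 h3
      _ ≤ (matC M + C) * ((1 + cA * ‖e‖) + ‖w‖) ^ 2 := by
          have hs0 : (0:ℝ) ≤ cA * ‖e‖ + ‖w‖ := by positivity
          have h4 : ‖v‖ * ‖v‖ ≤ (1 + (cA * ‖e‖ + ‖w‖)) ^ 2 := by nlinarith
          have h5 : (1 + ‖v‖) ^ 2 ≤ (1 + (cA * ‖e‖ + ‖w‖)) ^ 2 := by nlinarith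
          calc matC M * (‖v‖ * ‖v‖) + C * (1 + ‖v‖) ^ 2
              ≤ matC M * (1 + (cA * ‖e‖ + ‖w‖)) ^ 2 + C * (1 + (cA * ‖e‖ + ‖w‖)) ^ 2 :=
                add_le_add (mul_le_mul_of_nonneg_left h4 hcM0) (mul_le_mul_of_nonneg_left h5 hC)
            _ = (matC M + C) * ((1 + cA * ‖e‖) + ‖w‖) ^ 2 := by ring
  -- measurability / continuity in w
  have hcontw : ∀ e, Continuous (F e) := by
    intro e
    have hψc : Continuous (fun w : Fin n → ℝ => b • (A *ᵥ e) + w) :=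
      continuous_const.add continuous_id
    exact ((cont_quad M).comp hψc).add (hφc.comp hψc)
  -- continuity in e for fixed w
  have hconte : ∀ w, Continuous (fun e => F e w) := by
    intro w
    have hψc : Continuous (fun e : Fin n → ℝ => b • (A *ᵥ e) + w) :=
      ((cont_mulVec A).const_smul b).add continuous_const
    exact ((cont_quad M).comp hψc).add (hφc.comp hψc)
  have hint : ∀ e, Integrable (F e) μ := by
    intro e
    refine ((int_pow hmom (1 + cA * ‖e‖)).const_mul (matC M + C)).mono'
      (hcontw e).aestronglyMeasurable ?_
    exact Filter.Eventually.of_forall fun w => by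
      simpa [Real.norm_eq_abs] using hptw e w
  refine ⟨hint, ?_, ?_⟩
  · -- continuity
    rw [continuous_iff_continuousAt]
    intro e₀
    refine continuousAt_of_dominated
      (Filter.Eventually.of_forall fun e => (hcontw e).aestronglyMeasurable)
      ?_ ((int_pow hmom (1 + cA * (‖e₀‖ + 1))).const_mul (matC M + C))
      (Filter.Eventually.of_forall fun w => (hconte w).continuousAt)
    refine Filter.eventually_iff_exists_mem.2 ⟨Metric.ball e₀ 1, Metric.ball_mem_nhds e₀ one_pos, fun e he => ?_⟩
    refine Filter.Eventually.of_forall fun w => ?_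
    have hee : ‖e‖ ≤ ‖e₀‖ + 1 := by
      have := mem_ball_iff_norm.1 he
      have := norm_le_norm_add_norm_sub' e e₀  -- ‖e‖ ≤ ‖e₀‖ + ‖e - e₀‖
      linarith [mem_ball_iff_norm.1 he, norm_le_norm_add_norm_sub' e e₀]
    have h1 := hptw e w
    have hmono : ((1 + cA * ‖e‖) + ‖w‖) ^ 2 ≤ ((1 + cA * (‖e₀‖ + 1)) + ‖w‖) ^ 2 := by
      have : (1 + cA * ‖e‖) + ‖w‖ ≤ (1 + cA * (‖e₀‖ + 1)) + ‖w‖ := by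
        have := mul_le_mul_of_nonneg_left hee hcA0
        linarith
      have h0 : (0:ℝ) ≤ (1 + cA * ‖e‖) + ‖w‖ := by positivity
      nlinarith
    rw [Real.norm_eq_abs]
    calc |F e w| ≤ (matC M + C) * ((1 + cA * ‖e‖) + ‖w‖) ^ 2 := h1
      _ ≤ (matC M + C) * ((1 + cA * (‖e₀‖ + 1)) + ‖w‖) ^ 2 := by
          exact mul_le_mul_of_nonneg_left hmono (by linarith)
  · -- bound
    intro e
    set d : ℝ := 1 + cA * ‖e‖ with hd
    have hd1 : 1 ≤ d := by
      have : 0 ≤ cA * ‖e‖ := mul_nonneg hcA0 (norm_nonneg e)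
      simp [hd]; linarith
    set Iw : ℝ := ∫ w, ‖w‖ ^ 2 ∂μ with hIw
    have hIw0 : 0 ≤ Iw := integral_nonneg fun w => by positivity
    have step1 : |∫ w, F e w ∂μ| ≤ ∫ w, (matC M + C) * (d + ‖w‖) ^ 2 ∂μ := by
      refine le_trans ?_ (integral_mono (hint e).abs ((int_pow hmom d).const_mul _) fun w => hptw e w)
      simpa [Real.norm_eq_abs] using norm_integral_le_integral_norm (F e)
    have step2 : ∫ w, (matC M + C) * (d + ‖w‖) ^ 2 ∂μ = (matC M + C) * ∫ w, (d + ‖w‖) ^ 2 ∂μ :=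
      integral_const_mul _ _
    have step3 : ∫ w, (d + ‖w‖) ^ 2 ∂μ ≤ 2 * d ^ 2 + 2 * Iw := by
      have h1 : ∫ w, (d + ‖w‖) ^ 2 ∂μ ≤ ∫ w : Fin n → ℝ, (2 * d ^ 2 + 2 * ‖w‖ ^ 2) ∂μ := by
        refine integral_mono (int_pow hmom d) ((integrable_const _).add (hmom.const_mul 2)) fun w => ?_
        nlinarith [norm_nonneg w, sq_nonneg (d - ‖w‖)]
      have h2 : ∫ w : Fin n → ℝ, (2 * d ^ 2 + 2 * ‖w‖ ^ 2) ∂μ = 2 * d ^ 2 + 2 * Iw := by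
        rw [integral_add (integrable_const _) (hmom.const_mul 2), integral_const,
          integral_const_mul]
        simp [hIw]
      linarith
    have step4 : 2 * d ^ 2 + 2 * Iw ≤ (2 + 2 * Iw) * (1 + cA) ^ 2 * (1 + ‖e‖) ^ 2 := by
      have hde : d ≤ (1 + cA) * (1 + ‖e‖) := by
        have he0 : (0:ℝ) ≤ ‖e‖ := norm_nonneg e
        nlinarith
      have hP1 : (1:ℝ) ≤ (1 + cA) * (1 + ‖e‖) := by nlinarith [norm_nonneg e]
      have hP : d ^ 2 ≤ ((1 + cA) * (1 + ‖e‖)) ^ 2 := by nlinarith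
      have hQ : 0 ≤ Iw * (((1 + cA) * (1 + ‖e‖)) ^ 2 - 1) := mul_nonneg hIw0 (by nlinarith)
      nlinarith [hP, hQ]
    calc |∫ w, F e w ∂μ| ≤ (matC M + C) * ∫ w, (d + ‖w‖) ^ 2 ∂μ := by rw [← step2]; exact step1
      _ ≤ (matC M + C) * ((2 + 2 * Iw) * (1 + cA) ^ 2 * (1 + ‖e‖) ^ 2) := by
          refine mul_le_mul_of_nonneg_left (le_trans step3 step4) (by linarith)
      _ = (matC M + C) * (2 + 2 * Iw) * (1 + cA) ^ 2 * (1 + ‖e‖) ^ 2 := by ring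

lemma Qrev_cont_bound {T : ℕ} (lam : ℝ) (A : Matrix (Fin n) (Fin n) ℝ)
    (Γ : ℕ → Matrix (Fin n) (Fin n) ℝ) (μ : Measure (Fin n → ℝ))
    [IsProbabilityMeasure μ] (hmom : Integrable (fun w => ‖w‖ ^ 2) μ) (g : ℕ → ℝ) :
    ∀ m, (∀ a : ℝ, a = 0 ∨ a = 1 → Continuous fun e => Qrev T lam A Γ μ g m e a) ∧
      (∃ C, 0 ≤ C ∧ ∀ (e : Fin n → ℝ) (a : ℝ), a = 0 ∨ a = 1 →
        |Qrev T lam A Γ μ g m e a| ≤ C * (1 + ‖e‖) ^ 2) := by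
  intro m
  induction m with
  | zero =>
    have hb : ∀ a : ℝ, a = 0 ∨ a = 1 → |1 - a| ≤ 1 := by
      rintro a (rfl | rfl) <;> norm_num
    constructor
    · intro a ha
      have H := helper A (Γ T) μ hmom (1 - a) (hb a ha) (fun _ => 0) continuous_const 0
        le_rfl (fun x => by simp)
      simp only [Qrev]
      simp only [add_zero] at H
      exact continuous_const.add H.2.1
    · refine ⟨|lam * g (T - 1)| + matC (Γ T) * (2 + 2 * ∫ w, ‖w‖ ^ 2 ∂μ) * (1 + matC A) ^ 2,
        ?_, ?_⟩
      · have hIw0 : 0 ≤ ∫ w : Fin n → ℝ, ‖w‖ ^ 2 ∂μ := integral_nonneg fun w => by positivity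
        have := matC_nonneg (Γ T); have := matC_nonneg A
        positivity
      · intro e a ha
        have H := helper A (Γ T) μ hmom (1 - a) (hb a ha) (fun _ => 0) continuous_const 0
          le_rfl (fun x => by simp)
        simp only [add_zero] at H
        have h2 := H.2.2 e
        have ha1 : |a| ≤ 1 := by rcases ha with rfl | rfl <;> norm_num
        have he1 : (1:ℝ) ≤ (1 + ‖e‖) ^ 2 := by nlinarith [norm_nonneg e]
        simp only [Qrev]
        calc |lam * g (T - 1) * a + _| ≤ |lam * g (T - 1) * a| + |∫ w, ((1 - a) • (A *ᵥ e) + w) ⬝ᵥ ((Γ T) *ᵥ ((1 - a) • (A *ᵥ e) + w)) ∂μ| := abs_add_le _ _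
          _ ≤ |lam * g (T - 1)| * 1 + matC (Γ T) * (2 + 2 * ∫ w, ‖w‖ ^ 2 ∂μ) * (1 + matC A) ^ 2 * (1 + ‖e‖) ^ 2 := by
              refine add_le_add ?_ (h2)
              rw [abs_mul]
              exact mul_le_mul_of_nonneg_left ha1 (abs_nonneg _)
          _ ≤ _ := by nlinarith [abs_nonneg (lam * g (T - 1)), h2, abs_nonneg (∫ w, ((1 - a) • (A *ᵥ e) + w) ⬝ᵥ ((Γ T) *ᵥ ((1 - a) • (A *ᵥ e) + w)) ∂μ)]
  | succ m ih =>
    obtain ⟨hcont, C, hC0, hCb⟩ := ih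
    set φ : (Fin n → ℝ) → ℝ := fun x => min (Qrev T lam A Γ μ g m x 0) (Qrev T lam A Γ μ g m x 1) with hφ
    have hφc : Continuous φ := (hcont 0 (Or.inl rfl)).min (hcont 1 (Or.inr rfl))
    have hφb : ∀ x, |φ x| ≤ C * (1 + ‖x‖) ^ 2 := by
      intro x
      have h0 := hCb x 0 (Or.inl rfl)
      have h1 := hCb x 1 (Or.inr rfl)
      rw [abs_le] at h0 h1 ⊢
      constructor
      · exact le_min (by linarith [h0.1]) (by linarith [h1.1])
      · exact le_trans (min_le_left _ _) h0.2
    have hb : ∀ a : ℝ, a = 0 ∨ a = 1 → |1 - a| ≤ 1 := by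
      rintro a (rfl | rfl) <;> norm_num
    constructor
    · intro a ha
      have H := helper A (Γ (T - (m + 1))) μ hmom (1 - a) (hb a ha) φ hφc C hC0 hφb
      simp only [Qrev]
      exact continuous_const.add H.2.1
    · refine ⟨|lam * g (T - 1 - (m + 1))| + (matC (Γ (T - (m + 1))) + C) * (2 + 2 * ∫ w, ‖w‖ ^ 2 ∂μ) * (1 + matC A) ^ 2, ?_, ?_⟩
      · have hIw0 : 0 ≤ ∫ w : Fin n → ℝ, ‖w‖ ^ 2 ∂μ := integral_nonneg fun w => by positivity
        have := matC_nonneg (Γ (T - (m + 1))); have := matC_nonneg A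
        positivity
      · intro e a ha
        have H := helper A (Γ (T - (m + 1))) μ hmom (1 - a) (hb a ha) φ hφc C hC0 hφb
        have h2 := H.2.2 e
        have ha1 : |a| ≤ 1 := by rcases ha with rfl | rfl <;> norm_num
        have he1 : (1:ℝ) ≤ (1 + ‖e‖) ^ 2 := by nlinarith [norm_nonneg e]
        simp only [Qrev]
        refine le_trans (abs_add_le _ _) ?_
        have h3 : |lam * g (T - 1 - (m + 1)) * a| ≤ |lam * g (T - 1 - (m + 1))| := by
          rw [abs_mul]
          simpa using mul_le_mul_of_nonneg_left ha1 (abs_nonneg (lam * g (T - 1 - (m + 1))))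
        nlinarith [h2, abs_nonneg (lam * g (T - 1 - (m + 1)))]

lemma Qrev_lipschitz {T : ℕ} (lam : ℝ) (hlam : 0 ≤ lam) (A : Matrix (Fin n) (Fin n) ℝ)
    (Γ : ℕ → Matrix (Fin n) (Fin n) ℝ) (μ : Measure (Fin n → ℝ))
    [IsProbabilityMeasure μ] (hmom : Integrable (fun w => ‖w‖ ^ 2) μ)
    (g₁ g₂ : ℕ → ℝ) (c : ℝ) (hc : 0 ≤ c) (hg : ∀ j, |g₁ j - g₂ j| ≤ c) :
    ∀ m, ∀ (e : Fin n → ℝ) (a : ℝ), a = 0 ∨ a = 1 →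
      |Qrev T lam A Γ μ g₁ m e a - Qrev T lam A Γ μ g₂ m e a| ≤ ((m : ℝ) + 1) * lam * c := by
  intro m
  induction m with
  | zero =>
    intro e a ha
    have ha1 : |a| ≤ 1 := by rcases ha with rfl | rfl <;> norm_num
    simp only [Qrev]
    have heq : lam * g₁ (T - 1) * a +
          (∫ w, ((1 - a) • (A *ᵥ e) + w) ⬝ᵥ ((Γ T) *ᵥ ((1 - a) • (A *ᵥ e) + w)) ∂μ) -
        (lam * g₂ (T - 1) * a +
          (∫ w, ((1 - a) • (A *ᵥ e) + w) ⬝ᵥ ((Γ T) *ᵥ ((1 - a) • (A *ᵥ e) + w)) ∂μ))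
        = lam * (g₁ (T - 1) - g₂ (T - 1)) * a := by ring
    rw [heq, abs_mul, abs_mul, abs_of_nonneg hlam]
    have h1 := hg (T - 1)
    have h2 : lam * |g₁ (T - 1) - g₂ (T - 1)| ≤ lam * c := mul_le_mul_of_nonneg_left h1 hlam
    calc lam * |g₁ (T - 1) - g₂ (T - 1)| * |a| ≤ lam * c * 1 :=
          mul_le_mul h2 ha1 (abs_nonneg _) (by positivity)
      _ = ((0 : ℝ) + 1) * lam * c := by ring
      _ = (((0 : ℕ) : ℝ) + 1) * lam * c := by norm_num
  | succ m ih =>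
    intro e a ha
    have ha1 : |a| ≤ 1 := by rcases ha with rfl | rfl <;> norm_num
    have hb : |1 - a| ≤ 1 := by rcases ha with rfl | rfl <;> norm_num
    obtain ⟨hcont₁, C₁, hC₁0, hCb₁⟩ := Qrev_cont_bound lam A Γ μ hmom g₁ m
    obtain ⟨hcont₂, C₂, hC₂0, hCb₂⟩ := Qrev_cont_bound lam A Γ μ hmom g₂ m
    set φ₁ : (Fin n → ℝ) → ℝ := fun x => min (Qrev T lam A Γ μ g₁ m x 0) (Qrev T lam A Γ μ g₁ m x 1) with hφ₁
    set φ₂ : (Fin n → ℝ) → ℝ := fun x => min (Qrev T lam A Γ μ g₂ m x 0) (Qrev T lam A Γ μ g₂ m x 1) with hφ₂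
    have hφ₁c : Continuous φ₁ := (hcont₁ 0 (Or.inl rfl)).min (hcont₁ 1 (Or.inr rfl))
    have hφ₂c : Continuous φ₂ := (hcont₂ 0 (Or.inl rfl)).min (hcont₂ 1 (Or.inr rfl))
    have hφ₁b : ∀ x, |φ₁ x| ≤ C₁ * (1 + ‖x‖) ^ 2 := by
      intro x
      have h0 := hCb₁ x 0 (Or.inl rfl); have h1 := hCb₁ x 1 (Or.inr rfl)
      rw [abs_le] at h0 h1 ⊢
      exact ⟨le_min (by linarith [h0.1]) (by linarith [h1.1]), le_trans (min_le_left _ _) h0.2⟩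
    have hφ₂b : ∀ x, |φ₂ x| ≤ C₂ * (1 + ‖x‖) ^ 2 := by
      intro x
      have h0 := hCb₂ x 0 (Or.inl rfl); have h1 := hCb₂ x 1 (Or.inr rfl)
      rw [abs_le] at h0 h1 ⊢
      exact ⟨le_min (by linarith [h0.1]) (by linarith [h1.1]), le_trans (min_le_left _ _) h0.2⟩
    have hint₁ := (helper A (Γ (T - (m + 1))) μ hmom (1 - a) hb φ₁ hφ₁c C₁ hC₁0 hφ₁b).1 e
    have hint₂ := (helper A (Γ (T - (m + 1))) μ hmom (1 - a) hb φ₂ hφ₂c C₂ hC₂0 hφ₂b).1 e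
    simp only [Qrev]
    have hsub :
        (∫ w, (((1 - a) • (A *ᵥ e) + w) ⬝ᵥ ((Γ (T - (m + 1))) *ᵥ ((1 - a) • (A *ᵥ e) + w)) +
            φ₁ ((1 - a) • (A *ᵥ e) + w)) ∂μ) -
        (∫ w, (((1 - a) • (A *ᵥ e) + w) ⬝ᵥ ((Γ (T - (m + 1))) *ᵥ ((1 - a) • (A *ᵥ e) + w)) +
            φ₂ ((1 - a) • (A *ᵥ e) + w)) ∂μ)
        = ∫ w, (φ₁ ((1 - a) • (A *ᵥ e) + w) - φ₂ ((1 - a) • (A *ᵥ e) + w)) ∂μ := by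
      rw [← integral_sub hint₁ hint₂]
      exact integral_congr_ae (Filter.Eventually.of_forall fun w => by ring)
    have hptw : ∀ w : Fin n → ℝ,
        |φ₁ ((1 - a) • (A *ᵥ e) + w) - φ₂ ((1 - a) • (A *ᵥ e) + w)| ≤ ((m : ℝ) + 1) * lam * c := by
      intro w
      set x := (1 - a) • (A *ᵥ e) + w
      refine le_trans (abs_min_sub_min_le_max _ _ _ _) ?_
      exact max_le (ih x 0 (Or.inl rfl)) (ih x 1 (Or.inr rfl))
    have hDint : Integrable (fun w =>
        φ₁ ((1 - a) • (A *ᵥ e) + w) - φ₂ ((1 - a) • (A *ᵥ e) + w)) μ := by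
      have heq : (fun w : Fin n → ℝ => φ₁ ((1 - a) • (A *ᵥ e) + w) - φ₂ ((1 - a) • (A *ᵥ e) + w))
          = fun w => ((((1 - a) • (A *ᵥ e) + w) ⬝ᵥ ((Γ (T - (m + 1))) *ᵥ ((1 - a) • (A *ᵥ e) + w)) +
            φ₁ ((1 - a) • (A *ᵥ e) + w)) -
            ((((1 - a) • (A *ᵥ e) + w) ⬝ᵥ ((Γ (T - (m + 1))) *ᵥ ((1 - a) • (A *ᵥ e) + w))) +
            φ₂ ((1 - a) • (A *ᵥ e) + w))) := by funext w; ring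
      rw [heq]
      exact hint₁.sub hint₂
    have hD : |∫ w, (φ₁ ((1 - a) • (A *ᵥ e) + w) - φ₂ ((1 - a) • (A *ᵥ e) + w)) ∂μ|
        ≤ ((m : ℝ) + 1) * lam * c := by
      calc |∫ w, (φ₁ ((1 - a) • (A *ᵥ e) + w) - φ₂ ((1 - a) • (A *ᵥ e) + w)) ∂μ|
          ≤ ∫ w, |φ₁ ((1 - a) • (A *ᵥ e) + w) - φ₂ ((1 - a) • (A *ᵥ e) + w)| ∂μ := by
            simpa [Real.norm_eq_abs] using norm_integral_le_integral_norm
              (fun w => φ₁ ((1 - a) • (A *ᵥ e) + w) - φ₂ ((1 - a) • (A *ᵥ e) + w))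
        _ ≤ ∫ _w : Fin n → ℝ, ((m : ℝ) + 1) * lam * c ∂μ :=
            integral_mono hDint.abs (integrable_const _) hptw
        _ = ((m : ℝ) + 1) * lam * c := by simp
    have hk := hg (T - 1 - (m + 1))
    have hmain : lam * g₁ (T - 1 - (m + 1)) * a +
          (∫ w, (((1 - a) • (A *ᵥ e) + w) ⬝ᵥ ((Γ (T - (m + 1))) *ᵥ ((1 - a) • (A *ᵥ e) + w)) +
            φ₁ ((1 - a) • (A *ᵥ e) + w)) ∂μ) -
        (lam * g₂ (T - 1 - (m + 1)) * a +
          (∫ w, (((1 - a) • (A *ᵥ e) + w) ⬝ᵥ ((Γ (T - (m + 1))) *ᵥ ((1 - a) • (A *ᵥ e) + w)) +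
            φ₂ ((1 - a) • (A *ᵥ e) + w)) ∂μ))
        = lam * (g₁ (T - 1 - (m + 1)) - g₂ (T - 1 - (m + 1))) * a +
          ∫ w, (φ₁ ((1 - a) • (A *ᵥ e) + w) - φ₂ ((1 - a) • (A *ᵥ e) + w)) ∂μ := by
      rw [← hsub]; ring
    rw [hmain]
    have h1 : |lam * (g₁ (T - 1 - (m + 1)) - g₂ (T - 1 - (m + 1))) * a| ≤ lam * c := by
      rw [abs_mul, abs_mul, abs_of_nonneg hlam]
      calc lam * |g₁ (T - 1 - (m + 1)) - g₂ (T - 1 - (m + 1))| * |a| ≤ lam * c * 1 :=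
        mul_le_mul (mul_le_mul_of_nonneg_left hk hlam) ha1 (abs_nonneg _) (by positivity)
      _ = lam * c := by ring
    refine le_trans (abs_add_le _ _) ?_
    push_cast
    linarith [hD]

lemma boltz_pos (α x : ℝ) : 0 ≤ boltz α x := by
  unfold boltz
  positivity

lemma boltz_le_one (α x : ℝ) : boltz α x ≤ 1 := by
  unfold boltz
  rw [inv_le_one_iff₀]
  right
  nlinarith [Real.exp_pos (-α * x)]

lemma boltz_continuous (α : ℝ) : Continuous (boltz α) := by
  unfold boltz
  refine Continuous.inv₀ (by continuity) fun x => ?_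
  nlinarith [Real.exp_pos (-α * x)]

lemma boltz_lip_aux {α : ℝ} (hα : 0 < α) {x y : ℝ} (hxy : x ≤ y) :
    0 ≤ boltz α y - boltz α x ∧ boltz α y - boltz α x ≤ α * (y - x) := by
  set u := Real.exp (-α * x) with hu'
  set v := Real.exp (-α * y) with hv'
  have hu : 0 < u := Real.exp_pos _
  have hv : 0 < v := Real.exp_pos _
  have hvu : v ≤ u := Real.exp_le_exp.2 (by nlinarith)
  have hb : boltz α y - boltz α x = (u - v) / ((1 + u) * (1 + v)) := by
    unfold boltz
    rw [← hu', ← hv', eq_div_iff (by positivity)]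
    field_simp
    ring
  have ht : 0 ≤ α * (y - x) := mul_nonneg hα.le (by linarith)
  have hkey : u - v ≤ u * (α * (y - x)) := by
    have hveq : v = u * Real.exp (α * x - α * y) := by
      rw [hu', hv', ← Real.exp_add]
      ring_nf
    have h1 := Real.add_one_le_exp (α * x - α * y)
    have h2 : u * ((α * x - α * y) + 1) ≤ u * Real.exp (α * x - α * y) :=
      mul_le_mul_of_nonneg_left h1 hu.le
    rw [← hveq] at h2
    nlinarith
  constructor
  · rw [hb]
    apply div_nonneg (by linarith)
    positivity
  · rw [hb, div_le_iff₀ (by positivity)]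
    nlinarith [mul_nonneg ht hv.le, mul_nonneg ht (mul_nonneg hu.le hv.le)]

lemma boltz_lipschitz {α : ℝ} (hα : 0 < α) (x y : ℝ) :
    |boltz α x - boltz α y| ≤ α * |x - y| := by
  rcases le_total x y with h | h
  · obtain ⟨h1, h2⟩ := boltz_lip_aux hα h
    rw [abs_sub_comm, abs_of_nonneg h1, abs_sub_comm, abs_of_nonneg (by linarith)]
    exact h2
  · obtain ⟨h1, h2⟩ := boltz_lip_aux hα h
    rw [abs_of_nonneg h1, abs_of_nonneg (by linarith)]
    exact h2

end Aux

/-- If `2αλT < 1` then the mean-field operator `𝒯` is a `2αλT`-contraction in the sup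
norm on `ℝ^T`, and consequently it has a unique fixed point `g* ∈ [0,1]^T`. -/
theorem mean_field_operator_contraction_and_unique_fixed_point
    {n T : ℕ} (hT : 1 ≤ T) (lam α : ℝ) (hlam : 0 < lam) (hα : 0 < α)
    (hcontr : 2 * α * lam * (T : ℝ) < 1)
    (A : Matrix (Fin n) (Fin n) ℝ) (Γ : ℕ → Matrix (Fin n) (Fin n) ℝ)
    (hΓ : ∀ k, (Γ k).PosSemidef)
    (μ : Measure (Fin n → ℝ)) [IsProbabilityMeasure μ]
    (hmom : Integrable (fun w => ‖w‖ ^ 2) μ)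
    (ν : Fin T → Measure (Fin n → ℝ)) [∀ k, IsProbabilityMeasure (ν k)] :
    (∀ g₁ g₂ : Fin T → ℝ,
        ‖Tmf T lam α A Γ μ ν g₁ - Tmf T lam α A Γ μ ν g₂‖ ≤
          2 * α * lam * (T : ℝ) * ‖g₁ - g₂‖) ∧
      ∃! gs : Fin T → ℝ,
        (∀ k, gs k ∈ Set.Icc (0 : ℝ) 1) ∧ Tmf T lam α A Γ μ ν gs = gs := by
  have hK0 : 0 ≤ 2 * α * lam * (T : ℝ) := by positivity
  -- basic facts
  have hg_ext : ∀ (g₁ g₂ : Fin T → ℝ) (j : ℕ),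
      |extendSeq T g₁ j - extendSeq T g₂ j| ≤ ‖g₁ - g₂‖ := by
    intro g₁ g₂ j
    unfold extendSeq
    by_cases h : j < T
    · simp only [dif_pos h]
      have := norm_le_pi_norm (g₁ - g₂) ⟨j, h⟩
      simpa [Real.norm_eq_abs] using this
    · simp [dif_neg h]
  have hVoI_cont : ∀ (g : Fin T → ℝ) (k : Fin T),
      Continuous fun e => VoI T lam A Γ μ (extendSeq T g) (k : ℕ) e := by
    intro g k
    have H := (Qrev_cont_bound (T := T) lam A Γ μ hmom (extendSeq T g) (T - 1 - (k : ℕ))).1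
    unfold VoI Qval
    exact (H 0 (Or.inl rfl)).sub (H 1 (Or.inr rfl))
  have hf_int : ∀ (g : Fin T → ℝ) (k : Fin T),
      Integrable (fun e => boltz α (VoI T lam A Γ μ (extendSeq T g) (k : ℕ) e)) (ν k) := by
    intro g k
    refine (integrable_const (1:ℝ)).mono'
      ((boltz_continuous α).comp (hVoI_cont g k)).aestronglyMeasurable ?_
    refine Filter.Eventually.of_forall fun e => ?_
    rw [Real.norm_eq_abs, abs_of_nonneg (boltz_pos _ _)]
    exact boltz_le_one _ _
  have hmem : ∀ (g : Fin T → ℝ) (k : Fin T), Tmf T lam α A Γ μ ν g k ∈ Set.Icc (0:ℝ) 1 := by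
    intro g k
    simp only [Tmf]
    constructor
    · exact integral_nonneg fun e => boltz_pos _ _
    · calc ∫ e, boltz α (VoI T lam A Γ μ (extendSeq T g) (k : ℕ) e) ∂(ν k)
          ≤ ∫ _e : Fin n → ℝ, (1:ℝ) ∂(ν k) :=
            integral_mono (hf_int g k) (integrable_const _) fun e => boltz_le_one _ _
        _ = 1 := by simp
  -- contraction estimate
  have hcon : ∀ g₁ g₂ : Fin T → ℝ,
      ‖Tmf T lam α A Γ μ ν g₁ - Tmf T lam α A Γ μ ν g₂‖ ≤
        2 * α * lam * (T : ℝ) * ‖g₁ - g₂‖ := by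
    intro g₁ g₂
    have hc0 : (0:ℝ) ≤ ‖g₁ - g₂‖ := norm_nonneg _
    rw [pi_norm_le_iff_of_nonneg (mul_nonneg hK0 hc0)]
    intro k
    rw [Pi.sub_apply, Real.norm_eq_abs]
    have hlc : 0 ≤ lam * ‖g₁ - g₂‖ := mul_nonneg hlam.le hc0
    have hVd : ∀ e : Fin n → ℝ,
        |VoI T lam A Γ μ (extendSeq T g₁) (k : ℕ) e - VoI T lam A Γ μ (extendSeq T g₂) (k : ℕ) e|
          ≤ 2 * (T : ℝ) * lam * ‖g₁ - g₂‖ := by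
      intro e
      unfold VoI Qval
      set m := T - 1 - (k : ℕ) with hm'
      have hm : (m : ℝ) + 1 ≤ (T : ℝ) := by
        have : m + 1 ≤ T := by omega
        exact_mod_cast this
      have h0 := Qrev_lipschitz (T := T) lam hlam.le A Γ μ hmom (extendSeq T g₁) (extendSeq T g₂)
        ‖g₁ - g₂‖ hc0 (hg_ext g₁ g₂) m e 0 (Or.inl rfl)
      have h1 := Qrev_lipschitz (T := T) lam hlam.le A Γ μ hmom (extendSeq T g₁) (extendSeq T g₂)
        ‖g₁ - g₂‖ hc0 (hg_ext g₁ g₂) m e 1 (Or.inr rfl)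
      have habs : |(Qrev T lam A Γ μ (extendSeq T g₁) m e 0 - Qrev T lam A Γ μ (extendSeq T g₁) m e 1) -
          (Qrev T lam A Γ μ (extendSeq T g₂) m e 0 - Qrev T lam A Γ μ (extendSeq T g₂) m e 1)|
          ≤ |Qrev T lam A Γ μ (extendSeq T g₁) m e 0 - Qrev T lam A Γ μ (extendSeq T g₂) m e 0| +
            |Qrev T lam A Γ μ (extendSeq T g₁) m e 1 - Qrev T lam A Γ μ (extendSeq T g₂) m e 1| := by
        have : (Qrev T lam A Γ μ (extendSeq T g₁) m e 0 - Qrev T lam A Γ μ (extendSeq T g₁) m e 1) -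
          (Qrev T lam A Γ μ (extendSeq T g₂) m e 0 - Qrev T lam A Γ μ (extendSeq T g₂) m e 1)
          = (Qrev T lam A Γ μ (extendSeq T g₁) m e 0 - Qrev T lam A Γ μ (extendSeq T g₂) m e 0) -
            (Qrev T lam A Γ μ (extendSeq T g₁) m e 1 - Qrev T lam A Γ μ (extendSeq T g₂) m e 1) := by ring
        rw [this]
        exact abs_sub _ _
      refine le_trans habs ?_
      nlinarith [h0, h1, hm, hlc, mul_nonneg (sub_nonneg.2 hm) hlc]
    have hptf : ∀ e : Fin n → ℝ,
        |boltz α (VoI T lam A Γ μ (extendSeq T g₁) (k : ℕ) e) -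
          boltz α (VoI T lam A Γ μ (extendSeq T g₂) (k : ℕ) e)|
          ≤ α * (2 * (T : ℝ) * lam * ‖g₁ - g₂‖) := fun e =>
      le_trans (boltz_lipschitz hα _ _) (mul_le_mul_of_nonneg_left (hVd e) hα.le)
    have hsub : Tmf T lam α A Γ μ ν g₁ k - Tmf T lam α A Γ μ ν g₂ k =
        ∫ e, (boltz α (VoI T lam A Γ μ (extendSeq T g₁) (k : ℕ) e) -
          boltz α (VoI T lam A Γ μ (extendSeq T g₂) (k : ℕ) e)) ∂(ν k) :=
      (integral_sub (hf_int g₁ k) (hf_int g₂ k)).symm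
    rw [hsub]
    calc |∫ e, (boltz α (VoI T lam A Γ μ (extendSeq T g₁) (k : ℕ) e) -
          boltz α (VoI T lam A Γ μ (extendSeq T g₂) (k : ℕ) e)) ∂(ν k)|
        ≤ ∫ e, |boltz α (VoI T lam A Γ μ (extendSeq T g₁) (k : ℕ) e) -
          boltz α (VoI T lam A Γ μ (extendSeq T g₂) (k : ℕ) e)| ∂(ν k) := by
          simpa [Real.norm_eq_abs] using norm_integral_le_integral_norm
            (fun e => boltz α (VoI T lam A Γ μ (extendSeq T g₁) (k : ℕ) e) -
              boltz α (VoI T lam A Γ μ (extendSeq T g₂) (k : ℕ) e))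
      _ ≤ ∫ _e : Fin n → ℝ, α * (2 * (T : ℝ) * lam * ‖g₁ - g₂‖) ∂(ν k) :=
          integral_mono ((hf_int g₁ k).sub (hf_int g₂ k)).abs (integrable_const _) hptf
      _ = α * (2 * (T : ℝ) * lam * ‖g₁ - g₂‖) := by simp
      _ = 2 * α * lam * (T : ℝ) * ‖g₁ - g₂‖ := by ring
  refine ⟨hcon, ?_⟩
  -- fixed point
  set K : NNReal := (2 * α * lam * (T : ℝ)).toNNReal with hK'
  have hlip : LipschitzWith K (Tmf T lam α A Γ μ ν) := by
    refine LipschitzWith.of_dist_le_mul fun x y => ?_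
    rw [dist_eq_norm, dist_eq_norm]
    rw [hK', Real.coe_toNNReal _ hK0]
    exact hcon x y
  have hcw : ContractingWith K (Tmf T lam α A Γ μ ν) :=
    ⟨Real.toNNReal_lt_one.2 hcontr, hlip⟩
  have hfix : Function.IsFixedPt (Tmf T lam α A Γ μ ν) (ContractingWith.fixedPoint _ hcw) :=
    ContractingWith.fixedPoint_isFixedPt hcw
  refine ⟨ContractingWith.fixedPoint _ hcw, ⟨?_, hfix⟩, ?_⟩
  · intro k
    rw [← hfix]
    exact hmem _ k
  · rintro y ⟨hy1, hy2⟩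
    exact hcw.fixedPoint_unique hy2
end

section
/- With the setup below, the time-averaged expected deviation of the empirical channel utilization from the mean-field trajectory satisfies (1/T) Σ_{k=0}^{T−1} E[ | (1/N) Σ_{j=1}^N γ^j_k − g*_k | ] ≤ 2/N + 1/√N + Σ_{ω ∈ Ω} | P_N(ω) − P(ω) |. -/
open MeasureTheory

/-- Cauchy–Schwarz: on a probability space, `∫ |f| ≤ √(∫ f²)`. -/
lemma integral_abs_le_sqrt_integral_sq {Ω : Type*} [MeasurableSpace Ω] (μ : Measure Ω)
    [IsProbabilityMeasure μ] {f : Ω → ℝ} (hf : Integrable f μ)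
    (hf2 : Integrable (fun x => f x ^ 2) μ) :
    (∫ x, |f x| ∂μ) ≤ Real.sqrt (∫ x, f x ^ 2 ∂μ) := by
  set c := ∫ x, |f x| ∂μ with hc
  have hc0 : 0 ≤ c := integral_nonneg fun x => abs_nonneg _
  have hfabs : Integrable (fun x => |f x|) μ := hf.abs
  have hpt : ∀ x, (|f x| - c) ^ 2 = f x ^ 2 - 2 * c * |f x| + c ^ 2 := by
    intro x
    have : |f x| ^ 2 = f x ^ 2 := sq_abs _
    nlinarith [this]
  have hintrhs : Integrable (fun x => f x ^ 2 - 2 * c * |f x| + c ^ 2) μ :=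
    (hf2.sub (hfabs.const_mul (2 * c))).add (integrable_const _)
  have h0 : (0 : ℝ) ≤ ∫ x, (|f x| - c) ^ 2 ∂μ := integral_nonneg fun x => sq_nonneg _
  have hexp : ∫ x, (|f x| - c) ^ 2 ∂μ = (∫ x, f x ^ 2 ∂μ) - c ^ 2 := by
    calc ∫ x, (|f x| - c) ^ 2 ∂μ = ∫ x, (f x ^ 2 - 2 * c * |f x| + c ^ 2) ∂μ := by
          refine integral_congr_ae (Filter.Eventually.of_forall fun x => hpt x)
      _ = (∫ x, f x ^ 2 ∂μ) - 2 * c * c + c ^ 2 := by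
          have e1 : Integrable (fun x => f x ^ 2 - 2 * c * |f x|) μ :=
            hf2.sub (hfabs.const_mul (2 * c))
          have e2 : Integrable (fun x => 2 * c * |f x|) μ := hfabs.const_mul (2 * c)
          rw [integral_add e1 (integrable_const _), integral_sub hf2 e2,
            integral_const_mul, integral_const]
          simp [← hc]
      _ = (∫ x, f x ^ 2 ∂μ) - c ^ 2 := by ring
  have hsq : c ^ 2 ≤ ∫ x, f x ^ 2 ∂μ := by linarith
  calc c = Real.sqrt (c ^ 2) := by rw [Real.sqrt_sq hc0]
    _ ≤ Real.sqrt (∫ x, f x ^ 2 ∂μ) := Real.sqrt_le_sqrt hsq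

/-- Time-averaged expected deviation of the empirical channel utilization from the
mean-field trajectory: with team types `ω_j ∈ Θ` having empirical distribution `P_N`,
limit type distribution `P`, per-type mean-field trajectories `g^θ ∈ [0,1]^T`,
mean-field trajectory `g*_k = Σ_θ P(θ) g^θ_k`, a deviating team `i`, and `{0,1}`-valued
transmission variables `γ^j_k` that (for `j ≠ i`) are mutually independent at each
time `k` with `E[γ^j_k] = g^{ω_j}_k`, we have
`(1/T) Σ_k E[|(1/N) Σ_j γ^j_k − g*_k|] ≤ 2/N + 1/√N + Σ_θ |P_N(θ) − P(θ)|`. -/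
theorem mean_field_empirical_deviation_bound
    {Ω' : Type*} [MeasurableSpace Ω'] (P' : Measure Ω') [IsProbabilityMeasure P']
    {Θ : Type*} [Fintype Θ] [DecidableEq Θ]
    (N T : ℕ) (hN : 1 ≤ N) (hT : 1 ≤ T)
    (ω : Fin N → Θ)
    (P : Θ → ℝ) (hP0 : ∀ θ, 0 ≤ P θ) (hP1 : ∑ θ, P θ = 1)
    (g : Θ → Fin T → ℝ) (hg : ∀ θ k, g θ k ∈ Set.Icc (0 : ℝ) 1)
    (i : Fin N)
    (γ : Fin N → Fin T → Ω' → ℝ)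
    (hmeas : ∀ j k, Measurable (γ j k))
    (hval : ∀ j k x, γ j k x = 0 ∨ γ j k x = 1)
    (hindep : ∀ k : Fin T,
      ProbabilityTheory.iIndepFun
        (fun j : {j : Fin N // j ≠ i} => γ j k) P')
    (hmeanγ : ∀ j : Fin N, j ≠ i → ∀ k : Fin T, (∫ x, γ j k x ∂P') = g (ω j) k) :
    (1 / T : ℝ) *
        ∑ k : Fin T,
          ∫ x, |(1 / N : ℝ) * ∑ j : Fin N, γ j k x - ∑ θ, P θ * g θ k| ∂P' ≤
      2 / N + 1 / Real.sqrt N +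
        ∑ θ, |((Finset.univ.filter fun j : Fin N => ω j = θ).card : ℝ) / N - P θ| := by
  classical
  have hNpos : (0 : ℝ) < N := by exact_mod_cast hN
  have hTpos : (0 : ℝ) < T := by exact_mod_cast hT
  set B : ℝ := 2 / N + 1 / Real.sqrt N +
      ∑ θ, |((Finset.univ.filter fun j : Fin N => ω j = θ).card : ℝ) / N - P θ| with hB
  -- per-time-step bound
  have key : ∀ k : Fin T,
      (∫ x, |(1 / N : ℝ) * ∑ j : Fin N, γ j k x - ∑ θ, P θ * g θ k| ∂P') ≤ B := by
    intro k
    set c : Fin N → ℝ := fun j => g (ω j) k with hcdef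
    have hc01 : ∀ j, 0 ≤ c j ∧ c j ≤ 1 := fun j => ⟨(hg (ω j) k).1, (hg (ω j) k).2⟩
    -- basic integrability / boundedness facts
    have hγbdd : ∀ j x, |γ j k x| ≤ 1 := by
      intro j x; rcases hval j k x with h | h <;> rw [h] <;> norm_num
    have hγint : ∀ j, Integrable (γ j k) P' := by
      intro j
      exact (memLp_one_iff_integrable.mp
        (MemLp.of_bound (hmeas j k).aestronglyMeasurable 1
          (Filter.Eventually.of_forall fun x => by simpa using hγbdd j x)))
    have hXmeas : ∀ j, Measurable fun x => γ j k x - c j := fun j =>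
      (hmeas j k).sub measurable_const
    have hXbdd : ∀ j x, |γ j k x - c j| ≤ 1 := by
      intro j x
      rcases hval j k x with h | h <;> rw [h] <;>
        · rw [abs_le]; constructor <;> nlinarith [(hc01 j).1, (hc01 j).2]
    have hXmem2 : ∀ j, MemLp (fun x => γ j k x - c j) 2 P' := fun j =>
      MemLp.of_bound (hXmeas j).aestronglyMeasurable 1
        (Filter.Eventually.of_forall fun x => by simpa using hXbdd j x)
    -- the centered sum over non-deviating teams
    set S : Ω' → ℝ := fun x => ∑ j ∈ Finset.univ.erase i, (γ j k x - c j) with hSdef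
    have hSeq : S = ∑ j ∈ Finset.univ.erase i, fun x => γ j k x - c j := by
      funext x; simp [hSdef]
    have hSmem2 : MemLp S 2 P' := by
      rw [hSeq]; exact memLp_finset_sum' _ fun j _ => hXmem2 j
    have hSint : Integrable S P' := hSmem2.integrable one_le_two
    have hSint2 : Integrable (fun x => S x ^ 2) P' := by
      simpa [hSdef] using hSmem2.integrable_sq
    -- mean zero
    have hSmean : ∫ x, S x ∂P' = 0 := by
      have e : ∀ j : Fin N, Integrable (fun x => γ j k x - c j) P' := fun j =>
        (hγint j).sub (integrable_const _)
      simp only [hSdef]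
      rw [integral_finset_sum _ fun j _ => e j]
      refine Finset.sum_eq_zero fun j hj => ?_
      have hji : j ≠ i := Finset.ne_of_mem_erase hj
      rw [integral_sub (hγint j) (integrable_const _), integral_const]
      simp [hmeanγ j hji k, hcdef]
    -- pairwise independence of centered variables
    have hpair : Set.Pairwise ↑(Finset.univ.erase i)
        fun j j' => ProbabilityTheory.IndepFun
          (fun x => γ j k x - c j) (fun x => γ j' k x - c j') P' := by
      intro j hj j' hj' hne
      have hji : j ≠ i := by simpa using hj
      have hj'i : j' ≠ i := by simpa using hj'
      have hidx : (⟨j, hji⟩ : {j : Fin N // j ≠ i}) ≠ ⟨j', hj'i⟩ := by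
        simpa [Subtype.ext_iff] using hne
      have hbase : ProbabilityTheory.IndepFun (γ j k) (γ j' k) P' :=
        (hindep k).indepFun hidx
      have := hbase.comp (φ := fun y => y - c j) (ψ := fun y => y - c j')
        (measurable_sub_const _) (measurable_sub_const _)
      exact this
    -- variance of each centered variable is at most 1
    have hvar : ∀ j, j ≠ i →
        ProbabilityTheory.variance (fun x => γ j k x - c j) P' ≤ 1 := by
      intro j hji
      rw [ProbabilityTheory.variance_eq_sub (hXmem2 j)]
      have hmean : ∫ x, γ j k x - c j ∂P' = 0 := by
        rw [integral_sub (hγint j) (integrable_const _), integral_const]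
        simp [hmeanγ j hji k, hcdef]
      have hsq : ∀ x, (γ j k x - c j) ^ 2 = (1 - 2 * c j) * γ j k x + c j ^ 2 := by
        intro x; rcases hval j k x with h | h <;> rw [h] <;> ring
      have hintsq : ∫ x, (γ j k x - c j) ^ 2 ∂P'
          = (1 - 2 * c j) * c j + c j ^ 2 := by
        calc ∫ x, (γ j k x - c j) ^ 2 ∂P'
            = ∫ x, ((1 - 2 * c j) * γ j k x + c j ^ 2) ∂P' :=
              integral_congr_ae (Filter.Eventually.of_forall fun x => hsq x)
          _ = (1 - 2 * c j) * (∫ x, γ j k x ∂P') + c j ^ 2 := by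
              have e1 : Integrable (fun x => (1 - 2 * c j) * γ j k x) P' :=
                (hγint j).const_mul _
              rw [integral_add e1 (integrable_const _), integral_const_mul, integral_const]
              simp
          _ = (1 - 2 * c j) * c j + c j ^ 2 := by rw [hmeanγ j hji k]
      have : (fun x => γ j k x - c j) ^ 2 = fun x => (γ j k x - c j) ^ 2 := by
        funext x; simp
      rw [this, hintsq, hmean]
      nlinarith [(hc01 j).1, (hc01 j).2]
    -- variance of the sum
    have hvarS : ProbabilityTheory.variance S P' ≤ N := by
      rw [hSeq]
      rw [ProbabilityTheory.IndepFun.variance_sum (fun j _ => hXmem2 j) hpair]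
      calc ∑ j ∈ Finset.univ.erase i, ProbabilityTheory.variance
              (fun x => γ j k x - c j) P'
          ≤ ∑ _j ∈ Finset.univ.erase i, (1 : ℝ) := by
            refine Finset.sum_le_sum fun j hj => hvar j (Finset.ne_of_mem_erase hj)
        _ = ((Finset.univ.erase i).card : ℝ) := by simp
        _ ≤ N := by
            have hcard : (Finset.univ.erase i).card ≤ N := by
              simpa using Finset.card_erase_le
                (s := (Finset.univ : Finset (Fin N))) (a := i)
            exact_mod_cast hcard
    -- E |S| ≤ √N
    have hES : (∫ x, |S x| ∂P') ≤ Real.sqrt N := by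
      have h1 := integral_abs_le_sqrt_integral_sq P' hSint hSint2
      have h2 : ∫ x, S x ^ 2 ∂P' = ProbabilityTheory.variance S P' := by
        rw [ProbabilityTheory.variance_eq_sub hSmem2, hSmean]
        have : S ^ 2 = fun x => S x ^ 2 := by funext x; simp
        rw [this]; ring
      rw [h2] at h1
      exact h1.trans (Real.sqrt_le_sqrt (by simpa using hvarS))
    -- the deterministic fiberwise identity
    have hfiber : ∑ j : Fin N, c j
        = ∑ θ, ((Finset.univ.filter fun j : Fin N => ω j = θ).card : ℝ) * g θ k := by
      rw [← Finset.sum_fiberwise Finset.univ ω (fun j => c j)]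
      refine Finset.sum_congr rfl fun θ _ => ?_
      rw [Finset.sum_congr rfl (fun j hj => ?_), Finset.sum_const, nsmul_eq_mul]
      have : ω j = θ := (Finset.mem_filter.mp hj).2
      simp [hcdef, this]
    set D : ℝ := (1 / N : ℝ) * ∑ j : Fin N, c j - ∑ θ, P θ * g θ k with hD
    have hDbound : |D| ≤
        ∑ θ, |((Finset.univ.filter fun j : Fin N => ω j = θ).card : ℝ) / N - P θ| := by
      have : D = ∑ θ, (((Finset.univ.filter fun j : Fin N => ω j = θ).card : ℝ) / N - P θ)
          * g θ k := by
        rw [hD, hfiber, Finset.mul_sum, ← Finset.sum_sub_distrib]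
        refine Finset.sum_congr rfl fun θ _ => by ring
      rw [this]
      refine (Finset.abs_sum_le_sum_abs _ _).trans (Finset.sum_le_sum fun θ _ => ?_)
      rw [abs_mul]
      have h1 : |g θ k| ≤ 1 := abs_le.mpr ⟨by linarith [(hg θ k).1], (hg θ k).2⟩
      calc |((Finset.univ.filter fun j : Fin N => ω j = θ).card : ℝ) / N - P θ| * |g θ k|
          ≤ |((Finset.univ.filter fun j : Fin N => ω j = θ).card : ℝ) / N - P θ| * 1 := by
            exact mul_le_mul_of_nonneg_left h1 (abs_nonneg _)
        _ = _ := mul_one _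
    -- pointwise decomposition
    have hdecomp : ∀ x, (1 / N : ℝ) * ∑ j : Fin N, γ j k x - ∑ θ, P θ * g θ k
        = (1 / N : ℝ) * (γ i k x - c i) + (1 / N : ℝ) * S x + D := by
      intro x
      have h1 : ∑ j ∈ Finset.univ.erase i, (γ j k x - c j) + (γ i k x - c i)
          = ∑ j : Fin N, (γ j k x - c j) :=
        Finset.sum_erase_add _ _ (Finset.mem_univ i)
      have h2 : ∑ j : Fin N, (γ j k x - c j)
          = ∑ j : Fin N, γ j k x - ∑ j : Fin N, c j := Finset.sum_sub_distrib _ _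
      have h3 : S x + (γ i k x - c i) = ∑ j : Fin N, γ j k x - ∑ j : Fin N, c j := by
        rw [hSdef]; rw [h1]; exact h2
      rw [hD]
      linear_combination (-(1 : ℝ) / N) * h3
    -- pointwise bound
    have hptbd : ∀ x, |(1 / N : ℝ) * ∑ j : Fin N, γ j k x - ∑ θ, P θ * g θ k|
        ≤ 1 / N + (1 / N : ℝ) * |S x| + |D| := by
      intro x
      rw [hdecomp x]
      calc |(1 / N : ℝ) * (γ i k x - c i) + (1 / N : ℝ) * S x + D|
          ≤ |(1 / N : ℝ) * (γ i k x - c i) + (1 / N : ℝ) * S x| + |D| := abs_add_le _ _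
        _ ≤ |(1 / N : ℝ) * (γ i k x - c i)| + |(1 / N : ℝ) * S x| + |D| := by
            gcongr; exact abs_add_le _ _
        _ ≤ 1 / N + (1 / N : ℝ) * |S x| + |D| := by
            rw [abs_mul, abs_mul]
            have hN1 : |(1 / N : ℝ)| = 1 / N := abs_of_pos (by positivity)
            rw [hN1]
            have h4 : (1 / N : ℝ) * |γ i k x - c i| ≤ (1 / N : ℝ) * 1 :=
              mul_le_mul_of_nonneg_left (hXbdd i x) (by positivity)
            linarith
    -- integrability of the lhs
    have hfint : Integrable
        (fun x => (1 / N : ℝ) * ∑ j : Fin N, γ j k x - ∑ θ, P θ * g θ k) P' :=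
      (((integrable_finset_sum _ fun j _ => hγint j).const_mul _).sub (integrable_const _))
    have hrint : Integrable (fun x => 1 / (N : ℝ) + (1 / N : ℝ) * |S x| + |D|) P' :=
      ((integrable_const _).add (hSint.abs.const_mul _)).add (integrable_const _)
    -- integrate
    have hIk : (∫ x, |(1 / N : ℝ) * ∑ j : Fin N, γ j k x - ∑ θ, P θ * g θ k| ∂P')
        ≤ 1 / N + (1 / N : ℝ) * (∫ x, |S x| ∂P') + |D| := by
      calc (∫ x, |(1 / N : ℝ) * ∑ j : Fin N, γ j k x - ∑ θ, P θ * g θ k| ∂P')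
          ≤ ∫ x, (1 / (N : ℝ) + (1 / N : ℝ) * |S x| + |D|) ∂P' :=
            integral_mono hfint.abs hrint hptbd
        _ = 1 / N + (1 / N : ℝ) * (∫ x, |S x| ∂P') + |D| := by
            have e1 : Integrable (fun x => (1 / N : ℝ) * |S x|) P' :=
              hSint.abs.const_mul _
            have e0 : Integrable (fun x => 1 / (N : ℝ) + (1 / N : ℝ) * |S x|) P' :=
              (integrable_const _).add e1
            rw [integral_add e0 (integrable_const _),
              integral_add (integrable_const _) e1,
              integral_const_mul, integral_const, integral_const]
            simp
    -- conclude
    have hsqrtN : (1 / N : ℝ) * Real.sqrt N = 1 / Real.sqrt N := by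
      have h0 : (0 : ℝ) < Real.sqrt N := Real.sqrt_pos.mpr hNpos
      rw [div_mul_eq_mul_div, one_mul, div_eq_div_iff (ne_of_gt hNpos) (ne_of_gt h0),
        Real.mul_self_sqrt hNpos.le, one_mul]
    have hmid : (1 / N : ℝ) * (∫ x, |S x| ∂P') ≤ 1 / Real.sqrt N := by
      calc (1 / N : ℝ) * (∫ x, |S x| ∂P') ≤ (1 / N : ℝ) * Real.sqrt N :=
            mul_le_mul_of_nonneg_left hES (by positivity)
        _ = 1 / Real.sqrt N := hsqrtN
    have h1N : (1 / N : ℝ) ≤ 2 / N := by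
      rw [div_le_div_iff₀ hNpos hNpos]; nlinarith
    calc (∫ x, |(1 / N : ℝ) * ∑ j : Fin N, γ j k x - ∑ θ, P θ * g θ k| ∂P')
        ≤ 1 / N + (1 / N : ℝ) * (∫ x, |S x| ∂P') + |D| := hIk
      _ ≤ 2 / N + 1 / Real.sqrt N +
          ∑ θ, |((Finset.univ.filter fun j : Fin N => ω j = θ).card : ℝ) / N - P θ| := by
          gcongr <;> first
            | exact h1N
            | exact hmid
            | exact hDbound
      _ = B := by rw [hB]
  -- average over k
  calc (1 / T : ℝ) *
        ∑ k : Fin T,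
          ∫ x, |(1 / N : ℝ) * ∑ j : Fin N, γ j k x - ∑ θ, P θ * g θ k| ∂P'
      ≤ (1 / T : ℝ) * ∑ _k : Fin T, B := by
        apply mul_le_mul_of_nonneg_left (Finset.sum_le_sum fun k _ => key k) (by positivity)
    _ = B := by
        rw [Finset.sum_const, Finset.card_univ, Fintype.card_fin, nsmul_eq_mul]
        field_simp
end

section
/- For any two mean-field sequences g¹, g² ∈ ℝ^T, every k ∈ {0, …, T−1}, every e ∈ ℝⁿ, and every a ∈ {0,1}, the state–action value functions satisfy Q^{g¹}_k(e, a) − Q^{g²}_k(e, a) ≤ λ (T − k) · max_{0 ≤ t ≤ T−1} |g¹_t − g²_t|; in particular Q^{g¹}_k(e, a) − Q^{g²}_k(e, a) ≤ λ T · ‖g¹ − g²‖_∞. -/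
open MeasureTheory Matrix

section Aux

variable {n : ℕ}

lemma abs_pi_apply_le (x : Fin n → ℝ) (i : Fin n) : |x i| ≤ ‖x‖ := by
  simpa using norm_le_pi_norm x i

lemma mulVec_norm_le' (A : Matrix (Fin n) (Fin n) ℝ) (e : Fin n → ℝ) :
    ‖A *ᵥ e‖ ≤ (∑ i, ∑ j, |A i j|) * ‖e‖ := by
  have hS : ∀ i : Fin n, (0:ℝ) ≤ ∑ j, |A i j| :=
    fun i => Finset.sum_nonneg fun j _ => abs_nonneg _
  have h0 : (0:ℝ) ≤ (∑ i, ∑ j, |A i j|) * ‖e‖ :=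
    mul_nonneg (Finset.sum_nonneg fun i _ => hS i) (norm_nonneg _)
  rw [pi_norm_le_iff_of_nonneg h0]
  intro i
  have h1 : |(A *ᵥ e) i| ≤ (∑ j, |A i j|) * ‖e‖ := by
    calc |(A *ᵥ e) i| = |∑ j, A i j * e j| := by simp [Matrix.mulVec, dotProduct]
      _ ≤ ∑ j, |A i j * e j| := Finset.abs_sum_le_sum_abs _ _
      _ ≤ ∑ j, |A i j| * ‖e‖ := Finset.sum_le_sum fun j _ => by
          rw [abs_mul]
          exact mul_le_mul_of_nonneg_left (abs_pi_apply_le e j) (abs_nonneg _)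
      _ = (∑ j, |A i j|) * ‖e‖ := by rw [Finset.sum_mul]
  calc ‖(A *ᵥ e) i‖ = |(A *ᵥ e) i| := rfl
    _ ≤ (∑ j, |A i j|) * ‖e‖ := h1
    _ ≤ (∑ i, ∑ j, |A i j|) * ‖e‖ := by
        apply mul_le_mul_of_nonneg_right _ (norm_nonneg _)
        exact Finset.single_le_sum (fun i _ => hS i) (Finset.mem_univ i)

lemma dot_quad_bound (M : Matrix (Fin n) (Fin n) ℝ) (x : Fin n → ℝ) :
    |x ⬝ᵥ (M *ᵥ x)| ≤ (∑ i, ∑ j, |M i j|) * ‖x‖ ^ 2 := by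
  have hrw : x ⬝ᵥ (M *ᵥ x) = ∑ i, ∑ j, x i * (M i j * x j) := by
    simp [dotProduct, Matrix.mulVec, Finset.mul_sum]
  rw [hrw]
  calc |∑ i, ∑ j, x i * (M i j * x j)| ≤ ∑ i, |∑ j, x i * (M i j * x j)| :=
        Finset.abs_sum_le_sum_abs _ _
    _ ≤ ∑ i, ∑ j, |x i * (M i j * x j)| :=
        Finset.sum_le_sum fun i _ => Finset.abs_sum_le_sum_abs _ _
    _ ≤ ∑ i, ∑ j, |M i j| * ‖x‖ ^ 2 := by
        refine Finset.sum_le_sum fun i _ => Finset.sum_le_sum fun j _ => ?_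
        rw [abs_mul, abs_mul]
        have hxi := abs_pi_apply_le x i
        have hxj := abs_pi_apply_le x j
        have h1 : |x i| * |x j| ≤ ‖x‖ * ‖x‖ :=
          mul_le_mul hxi hxj (abs_nonneg _) (norm_nonneg _)
        calc |x i| * (|M i j| * |x j|) = |M i j| * (|x i| * |x j|) := by ring
          _ ≤ |M i j| * (‖x‖ * ‖x‖) := mul_le_mul_of_nonneg_left h1 (abs_nonneg _)
          _ = |M i j| * ‖x‖ ^ 2 := by ring
    _ = (∑ i, ∑ j, |M i j|) * ‖x‖ ^ 2 := by
        rw [Finset.sum_mul]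
        exact Finset.sum_congr rfl fun i _ => (Finset.sum_mul _ _ _).symm

lemma measurable_mulVec' (A : Matrix (Fin n) (Fin n) ℝ) :
    Measurable fun e : Fin n → ℝ => A *ᵥ e := by
  apply measurable_pi_iff.mpr
  intro i
  simp only [Matrix.mulVec, dotProduct]
  exact Finset.measurable_sum _ fun j _ => measurable_const.mul (measurable_pi_apply j)

lemma measurable_quad (M : Matrix (Fin n) (Fin n) ℝ) :
    Measurable fun x : Fin n → ℝ => x ⬝ᵥ (M *ᵥ x) := by
  simp only [dotProduct]
  exact Finset.measurable_sum _ fun i _ =>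
    (measurable_pi_apply i).mul ((measurable_pi_apply i).comp (measurable_mulVec' M))

lemma Qrev_measurable (T : ℕ) (lam : ℝ) (A : Matrix (Fin n) (Fin n) ℝ)
    (Γ : ℕ → Matrix (Fin n) (Fin n) ℝ) (μ : Measure (Fin n → ℝ)) [SFinite μ] (g : ℕ → ℝ) :
    ∀ m a, Measurable fun e => Qrev T lam A Γ μ g m e a := by
  intro m
  induction m with
  | zero =>
    intro a
    simp only [Qrev]
    apply Measurable.add measurable_const
    have hcomp : Measurable fun p : (Fin n → ℝ) × (Fin n → ℝ) => (1 - a) • (A *ᵥ p.1) + p.2 := by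
      have h1 : Measurable fun p : (Fin n → ℝ) × (Fin n → ℝ) => A *ᵥ p.1 := by
        exact (measurable_mulVec' A).comp measurable_fst
      exact (h1.const_smul (1 - a)).add measurable_snd
    exact (((measurable_quad (Γ T)).comp hcomp).stronglyMeasurable.integral_prod_right').measurable
  | succ m ih =>
    intro a
    simp only [Qrev]
    apply Measurable.add measurable_const
    have hcomp : Measurable fun p : (Fin n → ℝ) × (Fin n → ℝ) => (1 - a) • (A *ᵥ p.1) + p.2 := by
      have h1 : Measurable fun p : (Fin n → ℝ) × (Fin n → ℝ) => A *ᵥ p.1 := by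
        exact (measurable_mulVec' A).comp measurable_fst
      exact (h1.const_smul (1 - a)).add measurable_snd
    have hF : Measurable fun x : Fin n → ℝ =>
        x ⬝ᵥ (Γ (T - (m + 1)) *ᵥ x) +
          min (Qrev T lam A Γ μ g m x 0) (Qrev T lam A Γ μ g m x 1) :=
      (measurable_quad _).add ((ih 0).min (ih 1))
    exact ((hF.comp hcomp).stronglyMeasurable.integral_prod_right').measurable

lemma integrable_of_quad_growth {μ : Measure (Fin n → ℝ)} [IsProbabilityMeasure μ]
    (hmom : Integrable (fun w => ‖w‖ ^ 2) μ)
    (F : (Fin n → ℝ) → ℝ) (hFm : Measurable F) (C : ℝ) (hC : 0 ≤ C)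
    (hF : ∀ x, |F x| ≤ C * (1 + ‖x‖ ^ 2)) (v : Fin n → ℝ) :
    Integrable (fun w => F (v + w)) μ := by
  apply Integrable.mono' ((integrable_const (C * (1 + 2 * ‖v‖ ^ 2))).add (hmom.const_mul (2 * C)))
  · exact (hFm.comp (measurable_const.add measurable_id)).aestronglyMeasurable
  · filter_upwards with w
    have h1 : ‖v + w‖ ≤ ‖v‖ + ‖w‖ := norm_add_le _ _
    have h2 : ‖v + w‖ ^ 2 ≤ 2 * ‖v‖ ^ 2 + 2 * ‖w‖ ^ 2 := by
      have h2' : ‖v + w‖ ^ 2 ≤ (‖v‖ + ‖w‖) ^ 2 := pow_le_pow_left₀ (norm_nonneg _) h1 2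
      nlinarith [sq_nonneg (‖v‖ - ‖w‖)]
    calc ‖F (v + w)‖ = |F (v + w)| := Real.norm_eq_abs _
      _ ≤ C * (1 + ‖v + w‖ ^ 2) := hF _
      _ ≤ C * (1 + 2 * ‖v‖ ^ 2) + 2 * C * ‖w‖ ^ 2 := by nlinarith

lemma abs_integral_shift_le {μ : Measure (Fin n → ℝ)} [IsProbabilityMeasure μ]
    (hmom : Integrable (fun w => ‖w‖ ^ 2) μ)
    (F : (Fin n → ℝ) → ℝ) (hFm : Measurable F) (C : ℝ) (hC : 0 ≤ C)
    (hF : ∀ x, |F x| ≤ C * (1 + ‖x‖ ^ 2)) (v : Fin n → ℝ) :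
    |∫ w, F (v + w) ∂μ| ≤ C * (1 + 2 * ‖v‖ ^ 2) + 2 * C * ∫ w, ‖w‖ ^ 2 ∂μ := by
  have hint := integrable_of_quad_growth hmom F hFm C hC hF v
  calc |∫ w, F (v + w) ∂μ| ≤ ∫ w, |F (v + w)| ∂μ := by
        simpa [Real.norm_eq_abs] using norm_integral_le_integral_norm (fun w => F (v + w)) (μ := μ)
    _ ≤ ∫ w, (C * (1 + 2 * ‖v‖ ^ 2) + 2 * C * ‖w‖ ^ 2) ∂μ := by
        apply integral_mono hint.abs ((integrable_const _).add (hmom.const_mul (2 * C)))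
        intro w
        have h1 : ‖v + w‖ ≤ ‖v‖ + ‖w‖ := norm_add_le _ _
        have h2 : ‖v + w‖ ^ 2 ≤ 2 * ‖v‖ ^ 2 + 2 * ‖w‖ ^ 2 := by
          have h2' : ‖v + w‖ ^ 2 ≤ (‖v‖ + ‖w‖) ^ 2 := pow_le_pow_left₀ (norm_nonneg _) h1 2
          nlinarith [sq_nonneg (‖v‖ - ‖w‖)]
        calc |F (v + w)| ≤ C * (1 + ‖v + w‖ ^ 2) := hF _
          _ ≤ C * (1 + 2 * ‖v‖ ^ 2) + 2 * C * ‖w‖ ^ 2 := by nlinarith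
    _ = C * (1 + 2 * ‖v‖ ^ 2) + 2 * C * ∫ w, ‖w‖ ^ 2 ∂μ := by
        rw [integral_add (integrable_const _) (hmom.const_mul (2 * C)),
          integral_const, integral_const_mul]
        simp

set_option maxHeartbeats 1000000 in
lemma Qrev_growth (T : ℕ) (lam : ℝ) (A : Matrix (Fin n) (Fin n) ℝ)
    (Γ : ℕ → Matrix (Fin n) (Fin n) ℝ) (μ : Measure (Fin n → ℝ)) [IsProbabilityMeasure μ]
    (hmom : Integrable (fun w => ‖w‖ ^ 2) μ) (g : ℕ → ℝ) :
    ∀ m, ∃ C, 0 ≤ C ∧ ∀ e a, a = 0 ∨ a = 1 →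
      |Qrev T lam A Γ μ g m e a| ≤ C * (1 + ‖e‖ ^ 2) := by
  have hW : (0:ℝ) ≤ ∫ w, ‖w‖ ^ 2 ∂μ := integral_nonneg fun w => by positivity
  set W := ∫ w, ‖w‖ ^ 2 ∂μ with hWdef
  have hcA : (0:ℝ) ≤ ∑ i, ∑ j, |A i j| :=
    Finset.sum_nonneg fun i _ => Finset.sum_nonneg fun j _ => abs_nonneg _
  set cA := ∑ i, ∑ j, |A i j| with hcAdef
  have hvnorm : ∀ (e : Fin n → ℝ) (a : ℝ), a = 0 ∨ a = 1 →
      ‖(1 - a) • (A *ᵥ e)‖ ≤ cA * ‖e‖ := by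
    intro e a ha
    have h1 : |1 - a| ≤ 1 := by rcases ha with h | h <;> simp [h]
    calc ‖(1 - a) • (A *ᵥ e)‖ = |1 - a| * ‖A *ᵥ e‖ := by
          rw [norm_smul, Real.norm_eq_abs]
      _ ≤ 1 * ‖A *ᵥ e‖ := mul_le_mul_of_nonneg_right h1 (norm_nonneg _)
      _ = ‖A *ᵥ e‖ := one_mul _
      _ ≤ cA * ‖e‖ := mulVec_norm_le' A e
  intro m
  induction m with
  | zero =>
    set Cq := ∑ i, ∑ j, |Γ T i j| with hCqdef
    have hCq : (0:ℝ) ≤ Cq :=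
      Finset.sum_nonneg fun i _ => Finset.sum_nonneg fun j _ => abs_nonneg _
    have hquad : ∀ x : Fin n → ℝ, |x ⬝ᵥ (Γ T *ᵥ x)| ≤ Cq * (1 + ‖x‖ ^ 2) := by
      intro x
      calc |x ⬝ᵥ (Γ T *ᵥ x)| ≤ Cq * ‖x‖ ^ 2 := dot_quad_bound _ _
        _ ≤ Cq * (1 + ‖x‖ ^ 2) := by nlinarith [sq_nonneg ‖x‖]
    refine ⟨|lam * g (T - 1)| + Cq * (1 + 2 * cA ^ 2 + 2 * W), by positivity, ?_⟩
    intro e a ha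
    simp only [Qrev]
    have hInt := abs_integral_shift_le hmom _ (measurable_quad (Γ T)) Cq hCq hquad
      ((1 - a) • (A *ᵥ e))
    have hv := hvnorm e a ha
    have hv2 : ‖(1 - a) • (A *ᵥ e)‖ ^ 2 ≤ cA ^ 2 * ‖e‖ ^ 2 := by
      have := norm_nonneg ((1 - a) • (A *ᵥ e))
      nlinarith [norm_nonneg e, mul_nonneg hcA (norm_nonneg e)]
    have ha1 : |a| ≤ 1 := by rcases ha with h | h <;> simp [h]
    have hterm : |lam * g (T - 1) * a| ≤ |lam * g (T - 1)| := by
      rw [abs_mul]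
      nlinarith [abs_nonneg (lam * g (T - 1))]
    calc |lam * g (T - 1) * a + ∫ w, ((1 - a) • (A *ᵥ e) + w) ⬝ᵥ (Γ T *ᵥ ((1 - a) • (A *ᵥ e) + w)) ∂μ|
        ≤ |lam * g (T - 1) * a| + |∫ w, ((1 - a) • (A *ᵥ e) + w) ⬝ᵥ (Γ T *ᵥ ((1 - a) • (A *ᵥ e) + w)) ∂μ| :=
          abs_add_le _ _
      _ ≤ |lam * g (T - 1)| + (Cq * (1 + 2 * ‖(1 - a) • (A *ᵥ e)‖ ^ 2) + 2 * Cq * W) := by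
          exact add_le_add hterm hInt
      _ ≤ (|lam * g (T - 1)| + Cq * (1 + 2 * cA ^ 2 + 2 * W)) * (1 + ‖e‖ ^ 2) := by
          nlinarith [sq_nonneg ‖e‖, abs_nonneg (lam * g (T - 1)), mul_nonneg hCq hW,
            mul_nonneg (mul_nonneg hCq (sq_nonneg cA)) (sq_nonneg ‖e‖)]
  | succ m ih =>
    obtain ⟨Cm, hCm0, hCm⟩ := ih
    set Cq := ∑ i, ∑ j, |Γ (T - (m + 1)) i j| with hCqdef
    have hCq : (0:ℝ) ≤ Cq :=
      Finset.sum_nonneg fun i _ => Finset.sum_nonneg fun j _ => abs_nonneg _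
    have hFm : Measurable fun x : Fin n → ℝ =>
        x ⬝ᵥ (Γ (T - (m + 1)) *ᵥ x) +
          min (Qrev T lam A Γ μ g m x 0) (Qrev T lam A Γ μ g m x 1) :=
      (measurable_quad _).add
        ((Qrev_measurable T lam A Γ μ g m 0).min (Qrev_measurable T lam A Γ μ g m 1))
    have hFbound : ∀ x : Fin n → ℝ,
        |x ⬝ᵥ (Γ (T - (m + 1)) *ᵥ x) +
          min (Qrev T lam A Γ μ g m x 0) (Qrev T lam A Γ μ g m x 1)| ≤
        (Cq + Cm) * (1 + ‖x‖ ^ 2) := by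
      intro x
      have h1 : |x ⬝ᵥ (Γ (T - (m + 1)) *ᵥ x)| ≤ Cq * ‖x‖ ^ 2 := dot_quad_bound _ _
      have h2 : |min (Qrev T lam A Γ μ g m x 0) (Qrev T lam A Γ μ g m x 1)| ≤
          Cm * (1 + ‖x‖ ^ 2) := by
        rcases min_cases (Qrev T lam A Γ μ g m x 0) (Qrev T lam A Γ μ g m x 1) with
          ⟨h, _⟩ | ⟨h, _⟩
        · rw [h]; exact hCm x 0 (Or.inl rfl)
        · rw [h]; exact hCm x 1 (Or.inr rfl)
      calc |x ⬝ᵥ (Γ (T - (m + 1)) *ᵥ x) +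
            min (Qrev T lam A Γ μ g m x 0) (Qrev T lam A Γ μ g m x 1)|
          ≤ |x ⬝ᵥ (Γ (T - (m + 1)) *ᵥ x)| +
            |min (Qrev T lam A Γ μ g m x 0) (Qrev T lam A Γ μ g m x 1)| := abs_add_le _ _
        _ ≤ Cq * ‖x‖ ^ 2 + Cm * (1 + ‖x‖ ^ 2) := add_le_add h1 h2
        _ ≤ (Cq + Cm) * (1 + ‖x‖ ^ 2) := by nlinarith [sq_nonneg ‖x‖]
    refine ⟨|lam * g (T - 1 - (m + 1))| + (Cq + Cm) * (1 + 2 * cA ^ 2 + 2 * W),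
      by positivity, ?_⟩
    intro e a ha
    simp only [Qrev]
    have hInt := abs_integral_shift_le hmom _ hFm (Cq + Cm) (by linarith) hFbound
      ((1 - a) • (A *ᵥ e))
    have hv := hvnorm e a ha
    have hv2 : ‖(1 - a) • (A *ᵥ e)‖ ^ 2 ≤ cA ^ 2 * ‖e‖ ^ 2 := by
      have := norm_nonneg ((1 - a) • (A *ᵥ e))
      nlinarith [norm_nonneg e, mul_nonneg hcA (norm_nonneg e)]
    have ha1 : |a| ≤ 1 := by rcases ha with h | h <;> simp [h]
    have hterm : |lam * g (T - 1 - (m + 1)) * a| ≤ |lam * g (T - 1 - (m + 1))| := by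
      rw [abs_mul]
      nlinarith [abs_nonneg (lam * g (T - 1 - (m + 1)))]
    calc |lam * g (T - 1 - (m + 1)) * a + ∫ w,
          (((1 - a) • (A *ᵥ e) + w) ⬝ᵥ (Γ (T - (m + 1)) *ᵥ ((1 - a) • (A *ᵥ e) + w)) +
            min (Qrev T lam A Γ μ g m ((1 - a) • (A *ᵥ e) + w) 0)
              (Qrev T lam A Γ μ g m ((1 - a) • (A *ᵥ e) + w) 1)) ∂μ|
        ≤ |lam * g (T - 1 - (m + 1)) * a| + |∫ w,
          (((1 - a) • (A *ᵥ e) + w) ⬝ᵥ (Γ (T - (m + 1)) *ᵥ ((1 - a) • (A *ᵥ e) + w)) +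
            min (Qrev T lam A Γ μ g m ((1 - a) • (A *ᵥ e) + w) 0)
              (Qrev T lam A Γ μ g m ((1 - a) • (A *ᵥ e) + w) 1)) ∂μ| := abs_add_le _ _
      _ ≤ |lam * g (T - 1 - (m + 1))| +
          ((Cq + Cm) * (1 + 2 * ‖(1 - a) • (A *ᵥ e)‖ ^ 2) + 2 * (Cq + Cm) * W) :=
          add_le_add hterm hInt
      _ ≤ (|lam * g (T - 1 - (m + 1))| + (Cq + Cm) * (1 + 2 * cA ^ 2 + 2 * W)) *
          (1 + ‖e‖ ^ 2) := by
          nlinarith [sq_nonneg ‖e‖, abs_nonneg (lam * g (T - 1 - (m + 1))),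
            mul_nonneg (add_nonneg hCq hCm0) hW,
            mul_nonneg (mul_nonneg (add_nonneg hCq hCm0) (sq_nonneg cA)) (sq_nonneg ‖e‖)]

set_option maxHeartbeats 1000000 in
lemma Qrev_integrand_integrable (T : ℕ) (lam : ℝ) (A : Matrix (Fin n) (Fin n) ℝ)
    (Γ : ℕ → Matrix (Fin n) (Fin n) ℝ) (μ : Measure (Fin n → ℝ)) [IsProbabilityMeasure μ]
    (hmom : Integrable (fun w => ‖w‖ ^ 2) μ) (g : ℕ → ℝ) (m j : ℕ) (v : Fin n → ℝ) :
    Integrable (fun w => (v + w) ⬝ᵥ (Γ j *ᵥ (v + w)) +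
      min (Qrev T lam A Γ μ g m (v + w) 0) (Qrev T lam A Γ μ g m (v + w) 1)) μ := by
  obtain ⟨Cm, hCm0, hCm⟩ := Qrev_growth T lam A Γ μ hmom g m
  set Cq := ∑ i, ∑ j', |Γ j i j'| with hCqdef
  have hCq : (0:ℝ) ≤ Cq :=
    Finset.sum_nonneg fun i _ => Finset.sum_nonneg fun j' _ => abs_nonneg _
  apply integrable_of_quad_growth hmom
    (fun x => x ⬝ᵥ (Γ j *ᵥ x) + min (Qrev T lam A Γ μ g m x 0) (Qrev T lam A Γ μ g m x 1))
    ((measurable_quad _).add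
      ((Qrev_measurable T lam A Γ μ g m 0).min (Qrev_measurable T lam A Γ μ g m 1)))
    (Cq + Cm) (by linarith)
  intro x
  have h1 : |x ⬝ᵥ (Γ j *ᵥ x)| ≤ Cq * ‖x‖ ^ 2 := dot_quad_bound _ _
  have h2 : |min (Qrev T lam A Γ μ g m x 0) (Qrev T lam A Γ μ g m x 1)| ≤
      Cm * (1 + ‖x‖ ^ 2) := by
    rcases min_cases (Qrev T lam A Γ μ g m x 0) (Qrev T lam A Γ μ g m x 1) with
      ⟨h, _⟩ | ⟨h, _⟩
    · rw [h]; exact hCm x 0 (Or.inl rfl)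
    · rw [h]; exact hCm x 1 (Or.inr rfl)
  calc |x ⬝ᵥ (Γ j *ᵥ x) + min (Qrev T lam A Γ μ g m x 0) (Qrev T lam A Γ μ g m x 1)|
      ≤ |x ⬝ᵥ (Γ j *ᵥ x)| + |min (Qrev T lam A Γ μ g m x 0) (Qrev T lam A Γ μ g m x 1)| :=
        abs_add_le _ _
    _ ≤ Cq * ‖x‖ ^ 2 + Cm * (1 + ‖x‖ ^ 2) := add_le_add h1 h2
    _ ≤ (Cq + Cm) * (1 + ‖x‖ ^ 2) := by nlinarith [sq_nonneg ‖x‖]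

lemma min_sub_min_le {p₁ q₁ p₂ q₂ K : ℝ} (hp : p₁ - p₂ ≤ K) (hq : q₁ - q₂ ≤ K) :
    min p₁ q₁ - min p₂ q₂ ≤ K := by
  rcases le_total p₂ q₂ with h | h
  · rw [min_eq_left h]; linarith [min_le_left p₁ q₁]
  · rw [min_eq_right h]; linarith [min_le_right p₁ q₁]

set_option maxHeartbeats 1000000 in
lemma Qrev_diff_le (T : ℕ) (lam : ℝ) (hlam : 0 ≤ lam) (A : Matrix (Fin n) (Fin n) ℝ)
    (Γ : ℕ → Matrix (Fin n) (Fin n) ℝ) (μ : Measure (Fin n → ℝ)) [IsProbabilityMeasure μ]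
    (hmom : Integrable (fun w => ‖w‖ ^ 2) μ)
    (g₁ g₂ : ℕ → ℝ) (M : ℝ) (hM0 : 0 ≤ M) (hM : ∀ j, |g₁ j - g₂ j| ≤ M) :
    ∀ m (e : Fin n → ℝ) (a : ℝ), a = 0 ∨ a = 1 →
      Qrev T lam A Γ μ g₁ m e a - Qrev T lam A Γ μ g₂ m e a ≤ lam * (m + 1) * M := by
  have hga : ∀ (j : ℕ) (a : ℝ), a = 0 ∨ a = 1 →
      lam * g₁ j * a - lam * g₂ j * a ≤ lam * M := by
    intro j a ha
    have h1 : (g₁ j - g₂ j) * a ≤ M := by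
      rcases ha with h | h
      · simp [h, hM0]
      · simpa [h] using (le_abs_self _).trans (hM j)
    calc lam * g₁ j * a - lam * g₂ j * a = lam * ((g₁ j - g₂ j) * a) := by ring
      _ ≤ lam * M := mul_le_mul_of_nonneg_left h1 hlam
  intro m
  induction m with
  | zero =>
    intro e a ha
    simp only [Qrev]
    have := hga (T - 1) a ha
    push_cast
    linarith
  | succ m ih =>
    intro e a ha
    simp only [Qrev]
    set v := (1 - a) • (A *ᵥ e) with hv
    have hf₁ := Qrev_integrand_integrable T lam A Γ μ hmom g₁ m (T - (m + 1)) v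
    have hf₂ := Qrev_integrand_integrable T lam A Γ μ hmom g₂ m (T - (m + 1)) v
    have hKint : (∫ w, ((v + w) ⬝ᵥ (Γ (T - (m + 1)) *ᵥ (v + w)) +
          min (Qrev T lam A Γ μ g₁ m (v + w) 0) (Qrev T lam A Γ μ g₁ m (v + w) 1)) ∂μ) -
        (∫ w, ((v + w) ⬝ᵥ (Γ (T - (m + 1)) *ᵥ (v + w)) +
          min (Qrev T lam A Γ μ g₂ m (v + w) 0) (Qrev T lam A Γ μ g₂ m (v + w) 1)) ∂μ) ≤
        lam * (m + 1) * M := by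
      rw [← integral_sub hf₁ hf₂]
      calc (∫ w, (((v + w) ⬝ᵥ (Γ (T - (m + 1)) *ᵥ (v + w)) +
            min (Qrev T lam A Γ μ g₁ m (v + w) 0) (Qrev T lam A Γ μ g₁ m (v + w) 1)) -
            ((v + w) ⬝ᵥ (Γ (T - (m + 1)) *ᵥ (v + w)) +
            min (Qrev T lam A Γ μ g₂ m (v + w) 0) (Qrev T lam A Γ μ g₂ m (v + w) 1))) ∂μ)
          ≤ ∫ _w, (lam * (m + 1) * M) ∂μ := by
            apply integral_mono (hf₁.sub hf₂) (integrable_const _)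
            intro w
            have h0 := ih (v + w) 0 (Or.inl rfl)
            have h1 := ih (v + w) 1 (Or.inr rfl)
            have := min_sub_min_le h0 h1
            simp only [Pi.sub_apply]
            linarith
        _ = lam * (m + 1) * M := by simp
    have hg := hga (T - 1 - (m + 1)) a ha
    push_cast
    push_cast at hKint
    linarith

end Aux

/-- For any two mean-field sequences `g¹, g² ∈ ℝ^T`, the state–action value functions
satisfy `Q^{g¹}_k(e,a) − Q^{g²}_k(e,a) ≤ λ(T−k)·max_t |g¹_t − g²_t|`, and in particular
`Q^{g¹}_k(e,a) − Q^{g²}_k(e,a) ≤ λT·‖g¹ − g²‖_∞`. -/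
theorem Q_lipschitz_in_mean_field
    {n T : ℕ} (hT : 1 ≤ T) (lam : ℝ) (hlam : 0 < lam)
    (A : Matrix (Fin n) (Fin n) ℝ) (Γ : ℕ → Matrix (Fin n) (Fin n) ℝ)
    (hΓ : ∀ k, (Γ k).PosSemidef)
    (μ : Measure (Fin n → ℝ)) [IsProbabilityMeasure μ]
    (hmom : Integrable (fun w => ‖w‖ ^ 2) μ)
    (g₁ g₂ : Fin T → ℝ) (k : ℕ) (hk : k < T) (e : Fin n → ℝ)
    (a : ℝ) (ha : a = 0 ∨ a = 1) :
    Qval T lam A Γ μ (extendSeq T g₁) k e a - Qval T lam A Γ μ (extendSeq T g₂) k e a ≤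
        lam * ((T : ℝ) - (k : ℝ)) * (⨆ t : Fin T, |g₁ t - g₂ t|) ∧
      Qval T lam A Γ μ (extendSeq T g₁) k e a - Qval T lam A Γ μ (extendSeq T g₂) k e a ≤
        lam * (T : ℝ) * ‖g₁ - g₂‖ := by
  have hT0 : (0:ℕ) < T := hT
  haveI : Nonempty (Fin T) := ⟨⟨0, hT0⟩⟩
  set M := ⨆ t : Fin T, |g₁ t - g₂ t| with hMdef
  have hbdd : BddAbove (Set.range fun t : Fin T => |g₁ t - g₂ t|) :=
    Finite.bddAbove_range _
  have hM0 : 0 ≤ M := le_trans (abs_nonneg _) (le_ciSup hbdd ⟨0, hT0⟩)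
  have hMj : ∀ j, |extendSeq T g₁ j - extendSeq T g₂ j| ≤ M := by
    intro j
    by_cases h : j < T
    · simp only [extendSeq, dif_pos h]
      exact le_ciSup hbdd ⟨j, h⟩
    · simp only [extendSeq, dif_neg h]
      simpa using hM0
  have key := Qrev_diff_le T lam hlam.le A Γ μ hmom (extendSeq T g₁) (extendSeq T g₂)
    M hM0 hMj (T - 1 - k) e a ha
  have hcast : ((T - 1 - k : ℕ) : ℝ) + 1 = (T : ℝ) - (k : ℝ) := by
    have h1 : T - 1 - k + 1 = T - k := by omega
    have h2 : ((T - 1 - k : ℕ) : ℝ) + 1 = ((T - 1 - k + 1 : ℕ) : ℝ) := by push_cast; ring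
    rw [h2, h1, Nat.cast_sub hk.le]
  have first : Qval T lam A Γ μ (extendSeq T g₁) k e a -
      Qval T lam A Γ μ (extendSeq T g₂) k e a ≤ lam * ((T:ℝ) - (k:ℝ)) * M := by
    simpa only [Qval, hcast] using key
  refine ⟨first, ?_⟩
  have hMnorm : M ≤ ‖g₁ - g₂‖ := by
    apply ciSup_le
    intro t
    calc |g₁ t - g₂ t| = ‖(g₁ - g₂) t‖ := by simp [Real.norm_eq_abs]
      _ ≤ ‖g₁ - g₂‖ := norm_le_pi_norm _ t
  have hTk : (T:ℝ) - (k:ℝ) ≤ (T:ℝ) := sub_le_self _ (Nat.cast_nonneg k)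
  have h2 : lam * ((T:ℝ) - (k:ℝ)) * M ≤ lam * (T:ℝ) * ‖g₁ - g₂‖ :=
    mul_le_mul (mul_le_mul_of_nonneg_left hTk hlam.le) hMnorm hM0
      (mul_nonneg hlam.le (Nat.cast_nonneg T))
  exact first.trans h2
end

section
/- For any two mean-field sequences g¹, g² ∈ ℝ^T, every k ∈ {0, …, T−1}, and every e ∈ ℝⁿ, the value of information satisfies |VoI^{g¹}_k(e) − VoI^{g²}_k(e)| ≤ 2 λ (T − k) · ‖g¹ − g²‖_∞, where ‖·‖_∞ is the sup norm on ℝ^T. -/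
open MeasureTheory Matrix

-- measurability of Qrev in e
theorem qrev_meas {n : ℕ} (T : ℕ) (lam : ℝ) (A : Matrix (Fin n) (Fin n) ℝ)
    (Γ : ℕ → Matrix (Fin n) (Fin n) ℝ) (μ : Measure (Fin n → ℝ)) [SFinite μ] (g : ℕ → ℝ) :
    ∀ m a, Measurable (fun e => Qrev T lam A Γ μ g m e a) := by
  intro m
  induction m with
  | zero =>
      intro a
      simp only [Qrev]
      apply Measurable.const_add
      have hc : Continuous (fun p : (Fin n → ℝ) × (Fin n → ℝ) =>
          ((1 - a) • (A *ᵥ p.1) + p.2) ⬝ᵥ ((Γ T) *ᵥ ((1 - a) • (A *ᵥ p.1) + p.2))) := by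
        have h1 : Continuous (fun p : (Fin n → ℝ) × (Fin n → ℝ) =>
            (1 - a) • (A *ᵥ p.1) + p.2) := by
          exact ((continuous_const.matrix_mulVec continuous_fst).fun_const_smul _).add continuous_snd
        exact h1.dotProduct (continuous_const.matrix_mulVec h1)
      exact (hc.stronglyMeasurable.integral_prod_right').measurable
  | succ m ih =>
      intro a
      simp only [Qrev]
      apply Measurable.const_add
      have h1 : Continuous (fun p : (Fin n → ℝ) × (Fin n → ℝ) =>
          (1 - a) • (A *ᵥ p.1) + p.2) :=
        ((continuous_const.matrix_mulVec continuous_fst).fun_const_smul _).add continuous_snd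
      have hc : Continuous (fun p : (Fin n → ℝ) × (Fin n → ℝ) =>
          ((1 - a) • (A *ᵥ p.1) + p.2) ⬝ᵥ ((Γ (T - (m+1))) *ᵥ ((1 - a) • (A *ᵥ p.1) + p.2))) :=
        h1.dotProduct (continuous_const.matrix_mulVec h1)
      have hmin : Measurable (fun p : (Fin n → ℝ) × (Fin n → ℝ) =>
          min (Qrev T lam A Γ μ g m ((1 - a) • (A *ᵥ p.1) + p.2) 0)
              (Qrev T lam A Γ μ g m ((1 - a) • (A *ᵥ p.1) + p.2) 1)) :=
        ((ih 0).comp h1.measurable).min ((ih 1).comp h1.measurable)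
      exact ((hc.measurable.add hmin).stronglyMeasurable.integral_prod_right').measurable

theorem qrev_bound {n : ℕ} (T : ℕ) (lam : ℝ) (hlam : 0 ≤ lam)
    (A : Matrix (Fin n) (Fin n) ℝ) (Γ : ℕ → Matrix (Fin n) (Fin n) ℝ)
    (μ : Measure (Fin n → ℝ)) [IsProbabilityMeasure μ]
    (G₁ G₂ : ℕ → ℝ) (D : ℝ) (hD : 0 ≤ D) (hG : ∀ j, |G₁ j - G₂ j| ≤ D) :
    ∀ m e a, |a| ≤ 1 →
      |Qrev T lam A Γ μ G₁ m e a - Qrev T lam A Γ μ G₂ m e a| ≤ lam * (m + 1) * D := by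
  intro m
  induction m with
  | zero =>
      intro e a ha
      simp only [Qrev]
      have : lam * G₁ (T - 1) * a +
          (∫ w, ((1 - a) • (A *ᵥ e) + w) ⬝ᵥ ((Γ T) *ᵥ ((1 - a) • (A *ᵥ e) + w)) ∂μ) -
          (lam * G₂ (T - 1) * a +
          (∫ w, ((1 - a) • (A *ᵥ e) + w) ⬝ᵥ ((Γ T) *ᵥ ((1 - a) • (A *ᵥ e) + w)) ∂μ)) =
          lam * (G₁ (T - 1) - G₂ (T - 1)) * a := by ring
      rw [this, abs_mul, abs_mul, abs_of_nonneg hlam]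
      calc lam * |G₁ (T - 1) - G₂ (T - 1)| * |a| ≤ lam * D * 1 := by
            apply mul_le_mul (mul_le_mul le_rfl (hG _) (abs_nonneg _) hlam) ha (abs_nonneg _)
            positivity
        _ = lam * ((0:ℕ) + 1 : ℝ) * D := by push_cast; ring
  | succ m ih =>
      intro e a ha
      simp only [Qrev]
      set x : Fin n → ℝ := (1 - a) • (A *ᵥ e) with hx
      set f₁ : (Fin n → ℝ) → ℝ := fun w =>
        (x + w) ⬝ᵥ ((Γ (T - (m + 1))) *ᵥ (x + w)) +
          min (Qrev T lam A Γ μ G₁ m (x + w) 0) (Qrev T lam A Γ μ G₁ m (x + w) 1) with hf₁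
      set f₂ : (Fin n → ℝ) → ℝ := fun w =>
        (x + w) ⬝ᵥ ((Γ (T - (m + 1))) *ᵥ (x + w)) +
          min (Qrev T lam A Γ μ G₂ m (x + w) 0) (Qrev T lam A Γ μ G₂ m (x + w) 1) with hf₂
      -- pointwise bound on the difference
      have hdiff : ∀ w, |f₁ w - f₂ w| ≤ lam * (m + 1) * D := by
        intro w
        have : f₁ w - f₂ w =
            min (Qrev T lam A Γ μ G₁ m (x + w) 0) (Qrev T lam A Γ μ G₁ m (x + w) 1) -
            min (Qrev T lam A Γ μ G₂ m (x + w) 0) (Qrev T lam A Γ μ G₂ m (x + w) 1) := by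
          simp only [hf₁, hf₂]; ring
        rw [this]
        refine (abs_min_sub_min_le_max _ _ _ _).trans (max_le ?_ ?_)
        · exact ih (x + w) 0 (by norm_num)
        · exact ih (x + w) 1 (by norm_num)
      -- measurability of f₁, f₂
      have hxw : Continuous (fun w : Fin n → ℝ => x + w) := continuous_const.add continuous_id
      have hmeasf : ∀ G : ℕ → ℝ, Measurable (fun w =>
          (x + w) ⬝ᵥ ((Γ (T - (m + 1))) *ᵥ (x + w)) +
          min (Qrev T lam A Γ μ G m (x + w) 0) (Qrev T lam A Γ μ G m (x + w) 1)) := by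
        intro G
        have hq : Continuous (fun w : Fin n → ℝ =>
            (x + w) ⬝ᵥ ((Γ (T - (m + 1))) *ᵥ (x + w))) :=
          hxw.dotProduct (continuous_const.matrix_mulVec hxw)
        exact hq.measurable.add
          (((qrev_meas T lam A Γ μ G m 0).comp hxw.measurable).min
            ((qrev_meas T lam A Γ μ G m 1).comp hxw.measurable))
      have hd_int : Integrable (fun w => f₁ w - f₂ w) μ := by
        refine (integrable_const (lam * (m + 1) * D)).mono'
          (((hmeasf G₁).sub (hmeasf G₂)).aestronglyMeasurable) ?_
        exact Filter.Eventually.of_forall fun w => by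
          simpa [Real.norm_eq_abs] using hdiff w
      -- the middle integral difference
      have key : |(∫ w, f₁ w ∂μ) - ∫ w, f₂ w ∂μ| ≤ lam * (m + 1) * D := by
        by_cases h1 : Integrable f₁ μ
        · have h2 : Integrable f₂ μ := by
            have h : Integrable (fun w => f₁ w - (f₁ w - f₂ w)) μ := h1.sub hd_int
            simpa using h
          rw [← integral_sub h1 h2, ← Real.norm_eq_abs]
          calc ‖∫ w, (f₁ w - f₂ w) ∂μ‖ ≤ (lam * (m+1) * D) * (μ Set.univ).toReal :=
                norm_integral_le_of_norm_le_const
                  (Filter.Eventually.of_forall fun w => by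
                    simpa [Real.norm_eq_abs] using hdiff w)
            _ = lam * (m + 1) * D := by simp
        · have h2 : ¬ Integrable f₂ μ := by
            intro h2
            have h : Integrable (fun w => f₂ w + (f₁ w - f₂ w)) μ := h2.add hd_int
            exact h1 (by simpa using h)
          rw [integral_undef h1, integral_undef h2]
          simp; positivity
      -- combine
      have hfst : |lam * G₁ (T - 1 - (m + 1)) * a - lam * G₂ (T - 1 - (m + 1)) * a|
          ≤ lam * D := by
        have : lam * G₁ (T - 1 - (m + 1)) * a - lam * G₂ (T - 1 - (m + 1)) * a =
            lam * (G₁ (T - 1 - (m + 1)) - G₂ (T - 1 - (m + 1))) * a := by ring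
        rw [this, abs_mul, abs_mul, abs_of_nonneg hlam]
        calc lam * |G₁ (T - 1 - (m+1)) - G₂ (T - 1 - (m+1))| * |a| ≤ lam * D * 1 := by
              apply mul_le_mul (mul_le_mul le_rfl (hG _) (abs_nonneg _) hlam) ha (abs_nonneg _)
              positivity
          _ = lam * D := by ring
      have : lam * G₁ (T - 1 - (m + 1)) * a + (∫ w, f₁ w ∂μ) -
          (lam * G₂ (T - 1 - (m + 1)) * a + ∫ w, f₂ w ∂μ) =
          (lam * G₁ (T - 1 - (m + 1)) * a - lam * G₂ (T - 1 - (m + 1)) * a) +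
          ((∫ w, f₁ w ∂μ) - ∫ w, f₂ w ∂μ) := by ring
      rw [this]
      calc |_ + _| ≤ _ + _ := abs_add_le _ _
        _ ≤ lam * D + lam * (m + 1) * D := add_le_add hfst key
        _ = lam * (↑(m + 1) + 1) * D := by push_cast; ring

/-- For any two mean-field sequences `g¹, g² ∈ ℝ^T`, every `0 ≤ k ≤ T−1` and `e ∈ ℝⁿ`,
the value of information satisfies `|VoI^{g¹}_k(e) − VoI^{g²}_k(e)| ≤ 2λ(T−k)·‖g¹−g²‖_∞`. -/
theorem voi_lipschitz_in_mean_field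
    {n T : ℕ} (hT : 1 ≤ T) (lam : ℝ) (hlam : 0 < lam)
    (A : Matrix (Fin n) (Fin n) ℝ) (Γ : ℕ → Matrix (Fin n) (Fin n) ℝ)
    (hΓ : ∀ k, (Γ k).PosSemidef)
    (μ : Measure (Fin n → ℝ)) [IsProbabilityMeasure μ]
    (hmom : Integrable (fun w => ‖w‖ ^ 2) μ)
    (g₁ g₂ : Fin T → ℝ) (k : ℕ) (hk : k < T) (e : Fin n → ℝ) :
    |VoI T lam A Γ μ (extendSeq T g₁) k e - VoI T lam A Γ μ (extendSeq T g₂) k e| ≤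
      2 * lam * ((T : ℝ) - (k : ℝ)) * ‖g₁ - g₂‖ := by
  classical
  set G₁ := extendSeq T g₁
  set G₂ := extendSeq T g₂
  set D := ‖g₁ - g₂‖ with hDdef
  have hD : 0 ≤ D := norm_nonneg _
  have hG : ∀ j, |G₁ j - G₂ j| ≤ D := by
    intro j
    simp only [G₁, G₂, extendSeq]
    split
    · next h =>
        have : g₁ ⟨j, h⟩ - g₂ ⟨j, h⟩ = (g₁ - g₂) ⟨j, h⟩ := by simp
        rw [this, ← Real.norm_eq_abs]
        exact norm_le_pi_norm (g₁ - g₂) ⟨j, h⟩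
    · simpa using hD
  set m := T - 1 - k with hm
  have bound := qrev_bound T lam hlam.le A Γ μ G₁ G₂ D hD hG m e
  have b0 : |Qrev T lam A Γ μ G₁ m e 0 - Qrev T lam A Γ μ G₂ m e 0| ≤
      lam * (m + 1) * D := bound 0 (by norm_num)
  have b1 : |Qrev T lam A Γ μ G₁ m e 1 - Qrev T lam A Γ μ G₂ m e 1| ≤
      lam * (m + 1) * D := bound 1 (by norm_num)
  have hcast : (m : ℝ) + 1 = (T : ℝ) - (k : ℝ) := by
    have h1 : m + 1 = T - k := by omega
    have h2 : ((T - k : ℕ) : ℝ) = (T : ℝ) - (k : ℝ) := by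
      exact_mod_cast Nat.cast_sub hk.le
    rw [← h2, ← h1]
    push_cast
    ring
  have hre : VoI T lam A Γ μ G₁ k e - VoI T lam A Γ μ G₂ k e =
      (Qrev T lam A Γ μ G₁ m e 0 - Qrev T lam A Γ μ G₂ m e 0) -
      (Qrev T lam A Γ μ G₁ m e 1 - Qrev T lam A Γ μ G₂ m e 1) := by
    simp only [VoI, Qval, hm]
    ring
  rw [hre]
  calc |_ - _| ≤ _ + _ := abs_sub _ _
    _ ≤ lam * (m + 1) * D + lam * (m + 1) * D := add_le_add b0 b1
    _ = 2 * lam * ((m : ℝ) + 1) * D := by ring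
    _ = 2 * lam * ((T : ℝ) - (k : ℝ)) * ‖g₁ - g₂‖ := by rw [hcast]
end
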